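/- arXiv:2303.14359 — 6 statements merged into one kernel-verified Lean document; each statement's English description precedes it below -/
import Mathlib

section
/- For every bounded random compact operator T and every ε ∈ (0, 3) there exist a bounded random compact operator T̃ with ‖T − T̃‖_∞ ≤ ε and measurable maps e_i : Ω → H, i = 1, 2, …, such that for ℙ-a.e. ω the vectors (e_i(ω))_{i ≥ 1} form an orthonormal family in H and T̃(ω) e_i(ω) = (ε/3)^i · e_i(θω) for every i ≥ 1. -/
open MeasureTheory Filter Topology TopologicalSpace
open scoped RealInnerProductSpace ENNReal

noncomputable section

variable {Ω H : Type*}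

/-- A bounded random compact operator: strongly measurable, pointwise compact, and with
finite essential supremum of the operator norms. -/
structure IsBddRandomCompactOp [NormedAddCommGroup H] [NormedSpace ℝ H] [MeasurableSpace H]
    [MeasurableSpace Ω] (μ : Measure Ω) (T : Ω → H →L[ℝ] H) : Prop where
  meas : ∀ x : H, Measurable fun ω => T ω x
  compact : ∀ ω, IsCompactOperator (T ω)
  bdd : essSup (fun ω => (‖T ω‖₊ : ℝ≥0∞)) μ < ⊤

/-- composition with a measurable ℕ-valued function -/
lemma aux_measurable_nat_comp {β : Type*} [MeasurableSpace Ω] [MeasurableSpace β]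
    {g : Ω → ℕ → β} (hg : ∀ m, Measurable fun ω => g ω m)
    {u : Ω → ℕ} (hu : Measurable u) : Measurable fun ω => g ω (u ω) := by
  intro s hs
  have h : (fun ω => g ω (u ω)) ⁻¹' s = ⋃ m, u ⁻¹' {m} ∩ (fun ω => g ω m) ⁻¹' s := by
    ext ω
    simp only [Set.mem_preimage, Set.mem_iUnion, Set.mem_inter_iff, Set.mem_singleton_iff]
    constructor
    · intro h; exact ⟨u ω, rfl, h⟩
    · rintro ⟨m, hm, h⟩; rwa [hm]
  rw [h]
  exact MeasurableSet.iUnion fun m => (hu (measurableSet_singleton m)).inter (hg m hs)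

lemma aux_exists_orthonormal_seq [NormedAddCommGroup H] [InnerProductSpace ℝ H]
    [CompleteSpace H] (hinf : ¬ FiniteDimensional ℝ H) :
    ∃ b : ℕ → H, Orthonormal ℝ b := by
  obtain ⟨w, bw, hbw⟩ := exists_hilbertBasis ℝ H
  have hw_on : Orthonormal ℝ ((↑) : w → H) := by rw [← hbw]; exact bw.orthonormal
  have hw_inf : w.Infinite := by
    intro hfin
    apply hinf
    have hfd : FiniteDimensional ℝ (Submodule.span ℝ w) :=
      FiniteDimensional.span_of_finite ℝ hfin
    have hclosed : IsClosed ((Submodule.span ℝ w : Submodule ℝ H) : Set H) :=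
      Submodule.closed_of_finiteDimensional _
    have hdense : (Submodule.span ℝ w).topologicalClosure = ⊤ := by
      have := bw.dense_span
      rwa [hbw, Subtype.range_coe] at this
    have htop : (Submodule.span ℝ w : Submodule ℝ H) = ⊤ := by
      refine le_antisymm le_top ?_
      rw [← hdense]
      exact Submodule.topologicalClosure_minimal _ le_rfl hclosed
    rw [htop] at hfd
    exact Module.Finite.equiv (Submodule.topEquiv)
  refine ⟨fun n => (((hw_inf.natEmbedding : ℕ ↪ ↥w) n : ↥w) : H), ?_⟩
  exact hw_on.comp _ (hw_inf.natEmbedding).injective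

lemma aux_rankOne_compact [NormedAddCommGroup H] [InnerProductSpace ℝ H] (u v : H) :
    IsCompactOperator fun x : H => ⟪u, x⟫ • v := by
  refine ⟨(fun t : ℝ => t • v) '' Set.Icc (-(‖u‖ + 1)) (‖u‖ + 1),
    (isCompact_Icc).image (continuous_id.smul continuous_const), ?_⟩
  filter_upwards [Metric.ball_mem_nhds (0 : H) one_pos] with x hx
  refine ⟨⟪u, x⟫, ?_, rfl⟩
  have h1 : |⟪u, x⟫| ≤ ‖u‖ * ‖x‖ := abs_real_inner_le_norm u x
  have h2 : ‖x‖ < 1 := by simpa using hx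
  have h3 : |⟪u, x⟫| ≤ ‖u‖ + 1 := by
    nlinarith [norm_nonneg u, norm_nonneg x, abs_nonneg (⟪u, x⟫)]
  rw [Set.mem_Icc]
  constructor <;> [linarith [neg_abs_le (⟪u, x⟫)]; linarith [le_abs_self (⟪u, x⟫)]]

lemma aux_small_image [NormedAddCommGroup H] [InnerProductSpace ℝ H] [CompleteSpace H]
    {b : ℕ → H} (hb : Orthonormal ℝ b) (C : H →L[ℝ] H) (hC : IsCompactOperator (⇑C))
    {δ : ℝ} (hδ : 0 < δ) (N : ℕ) : ∃ n, N ≤ n ∧ ‖C (b n)‖ < δ := by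
  by_contra hcon
  push_neg at hcon
  obtain ⟨K, hK, hKmem⟩ := hC
  obtain ⟨r, hr, hrsub⟩ := Metric.mem_nhds_iff.mp hKmem
  set y : ℕ → H := fun n => C ((r / 2) • b (n + N)) with hy
  have hymem : ∀ n, y n ∈ K := by
    intro n
    apply hrsub
    simp only [Metric.mem_ball, dist_zero_right, norm_smul, Real.norm_eq_abs,
      hb.1 (n + N), mul_one, abs_of_pos (by linarith : (0:ℝ) < r / 2)]
    linarith
  obtain ⟨a, haK, φ, hφ, hlim⟩ := hK.tendsto_subseq hymem
  -- the norms of y n are bounded below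
  have hynorm : ∀ n, r / 2 * δ ≤ ‖y n‖ := by
    intro n
    rw [hy]
    simp only [_root_.map_smul, norm_smul, Real.norm_eq_abs, abs_of_pos (by linarith : (0:ℝ) < r / 2)]
    have := hcon (n + N) (Nat.le_add_left N n)
    nlinarith
  have hanorm : r / 2 * δ ≤ ‖a‖ :=
    ge_of_tendsto (hlim.norm) (Eventually.of_forall fun n => hynorm (φ n))
  -- inner products tend to zero
  set z := ContinuousLinearMap.adjoint C a with hz
  have hbz : Tendsto (fun m => ⟪z, b m⟫) atTop (𝓝 0) := by
    have hsumm : Summable fun m => ‖⟪b m, z⟫‖ ^ 2 := Orthonormal.inner_products_summable z hb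
    have h2 : Tendsto (fun m => ‖⟪b m, z⟫‖ ^ 2) atTop (𝓝 0) := hsumm.tendsto_atTop_zero
    have h3 : Tendsto (fun m => Real.sqrt (‖⟪b m, z⟫‖ ^ 2)) atTop (𝓝 0) := by
      simpa [Function.comp_def] using (Real.continuous_sqrt.tendsto 0).comp h2
    rw [tendsto_zero_iff_norm_tendsto_zero]
    refine h3.congr fun m => ?_
    rw [Real.sqrt_sq (norm_nonneg _), Real.norm_eq_abs, Real.norm_eq_abs, real_inner_comm]
  have hinner0 : Tendsto (fun n => ⟪a, y n⟫) atTop (𝓝 0) := by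
    have heq : ∀ n, ⟪a, y n⟫ = r / 2 * ⟪z, b (n + N)⟫ := by
      intro n
      rw [hy, hz]
      rw [← ContinuousLinearMap.adjoint_inner_left C ((r / 2) • b (n + N)) a]
      rw [real_inner_smul_right]
    have := (hbz.comp (tendsto_add_atTop_nat N)).const_mul (r / 2)
    simp only [Function.comp] at this
    refine Tendsto.congr (fun n => (heq n).symm) (by simpa using this)
  have hinnera : Tendsto (fun n => ⟪a, y (φ n)⟫) atTop (𝓝 ⟪a, a⟫) :=
    Tendsto.inner tendsto_const_nhds hlim
  have h0 : ⟪a, a⟫ = (0 : ℝ) :=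
    tendsto_nhds_unique hinnera (hinner0.comp hφ.tendsto_atTop)
  have : a = 0 := inner_self_eq_zero.mp h0
  rw [this, norm_zero] at hanorm
  nlinarith

/-- recursive selection by `Nat.find` -/
def auxSel (P : ℕ → ℕ → Ω → ℕ → Prop) [∀ k p ω, DecidablePred (P k p ω)]
    (hP : ∀ k p ω, ∃ m, P k p ω m) : ℕ → Ω → ℕ
  | 0 => fun ω => Nat.find (hP 0 0 ω)
  | (k + 1) => fun ω => Nat.find (hP (k + 1) (auxSel P hP k ω) ω)

lemma auxSel_spec_zero (P : ℕ → ℕ → Ω → ℕ → Prop) [∀ k p ω, DecidablePred (P k p ω)]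
    (hP : ∀ k p ω, ∃ m, P k p ω m) (ω : Ω) : P 0 0 ω (auxSel P hP 0 ω) :=
  Nat.find_spec (hP 0 0 ω)

lemma auxSel_spec_succ (P : ℕ → ℕ → Ω → ℕ → Prop) [∀ k p ω, DecidablePred (P k p ω)]
    (hP : ∀ k p ω, ∃ m, P k p ω m) (k : ℕ) (ω : Ω) :
    P (k + 1) (auxSel P hP k ω) ω (auxSel P hP (k + 1) ω) :=
  Nat.find_spec (hP (k + 1) (auxSel P hP k ω) ω)

lemma auxSel_measurable [MeasurableSpace Ω] (P : ℕ → ℕ → Ω → ℕ → Prop)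
    [∀ k p ω, DecidablePred (P k p ω)] (hP : ∀ k p ω, ∃ m, P k p ω m)
    (hm : ∀ k p m, MeasurableSet {ω | P k p ω m}) (k : ℕ) :
    Measurable (auxSel P hP k) := by
  induction k with
  | zero => exact measurable_find (fun ω => hP 0 0 ω) (fun m => hm 0 0 m)
  | succ k ih =>
      exact aux_measurable_nat_comp (g := fun ω j => Nat.find (hP (k + 1) j ω))
        (fun j => measurable_find (fun ω => hP (k + 1) j ω) (fun m => hm (k + 1) j m)) ih

set_option maxHeartbeats 1000000 in
/-- Theorem A(ii) (construction): any bounded random compact operator can be `ε`-perturbed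
to one possessing a measurable orthonormal family `(e_i)` of invariant directions with
`T̃(ω) e_i(ω) = (ε/3)^i e_i(θ ω)` for `i = 1, 2, …` (here indexed by `i + 1` for `i : ℕ`). -/
theorem perturbation_with_countably_many_exponents
    [NormedAddCommGroup H] [InnerProductSpace ℝ H] [CompleteSpace H] [SeparableSpace H]
    [MeasurableSpace H] [BorelSpace H] (hinf : ¬ FiniteDimensional ℝ H)
    [MeasurableSpace Ω] (μ : Measure Ω) [IsProbabilityMeasure μ]
    (θ : Ω ≃ᵐ Ω) (hθ : Ergodic (⇑θ) μ)
    (T : Ω → H →L[ℝ] H) (hT : IsBddRandomCompactOp μ T)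
    (ε : ℝ) (hε : ε ∈ Set.Ioo (0 : ℝ) 3) :
    ∃ (T' : Ω → H →L[ℝ] H) (e : ℕ → Ω → H), IsBddRandomCompactOp μ T' ∧
      (∀ᵐ ω ∂μ, ‖T ω - T' ω‖ ≤ ε) ∧
      (∀ i : ℕ, Measurable (e i)) ∧
      (∀ᵐ ω ∂μ, Orthonormal ℝ (fun i : ℕ => e i ω) ∧
        ∀ i : ℕ, T' ω (e i ω) = (ε / 3) ^ (i + 1) • e i (θ ω)) := by
  classical
  obtain ⟨hε0, hε3⟩ := hε
  haveI : SecondCountableTopology H := UniformSpace.secondCountable_of_separable H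
  obtain ⟨b, hb⟩ := aux_exists_orthonormal_seq hinf
  set η : ℝ := ε / 3 with hηdef
  have hη0 : 0 < η := by positivity
  have hη1 : η < 1 := by rw [hηdef]; linarith
  set c : ℕ → ℝ := fun k => η * (2⁻¹ : ℝ) ^ k with hc
  have hc0 : ∀ k, 0 < c k := fun k => by positivity
  set P : ℕ → ℕ → Ω → ℕ → Prop := fun k p ω m => p < m ∧ ‖T ω (b m)‖ < c k with hPdef
  have hP : ∀ k p ω, ∃ m, P k p ω m := by
    intro k p ω
    obtain ⟨n, hn, h⟩ := aux_small_image hb (T ω) (hT.compact ω) (hc0 k) (p + 1)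
    exact ⟨n, Nat.lt_of_succ_le hn, h⟩
  have hPm : ∀ k p m, MeasurableSet {ω | P k p ω m} := by
    intro k p m
    by_cases hpm : p < m
    · simp only [hPdef, hpm, true_and]
      exact measurableSet_lt ((hT.meas (b m)).norm) measurable_const
    · simp only [hPdef, hpm, false_and]
      exact MeasurableSet.const False
  set ns : ℕ → Ω → ℕ := auxSel P hP with hns
  have hns_meas : ∀ k, Measurable (ns k) := auxSel_measurable P hP hPm
  have hns_lt : ∀ k ω, ns k ω < ns (k + 1) ω := fun k ω => (auxSel_spec_succ P hP k ω).1
  have hns_mono : ∀ ω, StrictMono (fun k => ns k ω) := fun ω =>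
    strictMono_nat_of_lt_succ (fun k => hns_lt k ω)
  have hTsmall : ∀ k ω, ‖T ω (b (ns k ω))‖ < c k := by
    intro k ω
    cases k with
    | zero => exact (auxSel_spec_zero P hP ω).2
    | succ k => exact (auxSel_spec_succ P hP k ω).2
  set e : ℕ → Ω → H := fun k ω => b (ns k ω) with he
  have he_meas : ∀ k, Measurable (e k) := fun k =>
    aux_measurable_nat_comp (g := fun _ m => b m) (fun m => measurable_const) (hns_meas k)
  have he_on : ∀ ω, Orthonormal ℝ (fun k => e k ω) := fun ω =>
    hb.comp _ (hns_mono ω).injective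
  have he_norm : ∀ k ω, ‖e k ω‖ = 1 := fun k ω => hb.1 _
  -- rank one operators
  set R : H → H → (H →L[ℝ] H) := fun u v => (innerSL ℝ u).smulRight v with hR
  have hR_apply : ∀ u v x, R u v x = ⟪u, x⟫ • v := fun u v x => rfl
  have hR_norm : ∀ u v, ‖R u v‖ = ‖u‖ * ‖v‖ := by
    intro u v
    rw [hR]
    rw [ContinuousLinearMap.norm_smulRight_apply, innerSL_apply_norm]
  have hR_compact : ∀ u v, IsCompactOperator (⇑(R u v)) := fun u v => aux_rankOne_compact u v
  set A : Ω → ℕ → (H →L[ℝ] H) := fun ω k =>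
    η ^ (k + 1) • R (e k ω) (e k (θ ω)) - R (e k ω) (T ω (e k ω)) with hA
  have hA_norm : ∀ ω k, ‖A ω k‖ ≤ η ^ (k + 1) + c k := by
    intro ω k
    refine (norm_sub_le _ _).trans ?_
    gcongr
    · calc ‖η ^ (k + 1) • R (e k ω) (e k (θ ω))‖
          ≤ ‖η ^ (k + 1)‖ * ‖R (e k ω) (e k (θ ω))‖ := ContinuousLinearMap.opNorm_smul_le _ _
        _ = η ^ (k + 1) := by
            rw [hR_norm, he_norm, he_norm, Real.norm_eq_abs, abs_of_pos (by positivity)]; ring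
    · rw [hR_norm, he_norm, one_mul]
      exact (hTsmall k ω).le
  have hgs : Summable (fun k : ℕ => η ^ (k + 1) + c k) := by
    apply Summable.add
    · have := (summable_geometric_of_lt_one hη0.le hη1).mul_left η
      refine this.congr fun k => ?_
      rw [pow_succ, mul_comm]
    · exact (summable_geometric_of_lt_one (by norm_num) (by norm_num)).mul_left η
  have hA_normsummable : ∀ ω, Summable fun k => ‖A ω k‖ := fun ω =>
    Summable.of_nonneg_of_le (fun k => norm_nonneg _) (hA_norm ω) hgs
  have hA_summable : ∀ ω, Summable (A ω) := fun ω => (hA_normsummable ω).of_norm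
  set D : Ω → (H →L[ℝ] H) := fun ω => ∑' k, A ω k with hD
  have hD_hasSum : ∀ ω, HasSum (A ω) (D ω) := fun ω => (hA_summable ω).hasSum
  have hD_apply : ∀ ω x, HasSum (fun k => A ω k x) (D ω x) := by
    intro ω x
    have := (hD_hasSum ω).mapL (ContinuousLinearMap.apply ℝ H x)
    simpa using this
  have hgeo1 : Summable (fun k : ℕ => η ^ (k + 1)) := by
    have := (summable_geometric_of_lt_one hη0.le hη1).mul_left η
    refine this.congr fun k => ?_
    rw [pow_succ, mul_comm]
  have hgeo2 : Summable c := (summable_geometric_of_lt_one (by norm_num) (by norm_num)).mul_left η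
  -- the main norm estimate
  have hD_norm : ∀ ω, ‖D ω‖ ≤ ε := by
    intro ω
    refine ContinuousLinearMap.opNorm_le_bound _ hε0.le fun x => ?_
    set a : ℕ → ℝ := fun k => ⟪e k ω, x⟫ with ha
    have ha_le : ∀ k, |a k| ≤ ‖x‖ := by
      intro k
      have := abs_real_inner_le_norm (e k ω) x
      rwa [he_norm, one_mul] at this
    set s : ℕ → H := fun k => (η ^ (k + 1) * a k) • e k (θ ω) with hs
    set bb : ℕ → H := fun k => a k • T ω (e k ω) with hbb
    have hs_norm : ∀ k, ‖s k‖ ≤ η ^ (k + 1) * ‖x‖ := by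
      intro k
      rw [hs]
      simp only [norm_smul, Real.norm_eq_abs, he_norm, mul_one, abs_mul,
        abs_of_pos (pow_pos hη0 (k + 1))]
      exact mul_le_mul_of_nonneg_left (ha_le k) (by positivity)
    have hbb_norm : ∀ k, ‖bb k‖ ≤ c k * ‖x‖ := by
      intro k
      rw [hbb]
      simp only [norm_smul, Real.norm_eq_abs]
      rw [mul_comm (c k) ‖x‖]
      exact mul_le_mul (ha_le k) (hTsmall k ω).le (norm_nonneg _) (norm_nonneg _)
    have hsumSn : Summable fun k => ‖s k‖ :=
      Summable.of_nonneg_of_le (fun k => norm_nonneg _) hs_norm (hgeo1.mul_right _)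
    have hsumBn : Summable fun k => ‖bb k‖ :=
      Summable.of_nonneg_of_le (fun k => norm_nonneg _) hbb_norm
        ((hgeo2.mul_right _).congr fun k => rfl)
    have hsumS : Summable s := hsumSn.of_norm
    have hsumB : Summable bb := hsumBn.of_norm
    have hAx : ∀ k, A ω k x = s k - bb k := by
      intro k
      simp [hA, hs, hbb, ContinuousLinearMap.sub_apply, ContinuousLinearMap.smul_apply,
        hR_apply, smul_smul, ha]
    have hDx : D ω x = (∑' k, s k) - (∑' k, bb k) := by
      refine (hD_apply ω x).unique ?_
      have h2 := hsumS.hasSum.sub hsumB.hasSum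
      simpa only [hAx] using h2
    have hB_le : ‖∑' k, bb k‖ ≤ 2 * η * ‖x‖ := by
      have h1 : ‖∑' k, bb k‖ ≤ ∑' k, ‖bb k‖ := norm_tsum_le_tsum_norm hsumBn
      have h2 : ∑' k, ‖bb k‖ ≤ ∑' k, c k * ‖x‖ :=
        Summable.tsum_le_tsum hbb_norm hsumBn (hgeo2.mul_right _)
      have h3 : ∑' k, c k * ‖x‖ = 2 * η * ‖x‖ := by
        rw [tsum_mul_right]
        have : ∑' k, c k = η * 2 := by
          rw [hc]
          rw [tsum_mul_left, tsum_geometric_of_lt_one (by norm_num) (by norm_num)]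
          norm_num
        rw [this]; ring
      linarith
    have hS_le : ‖∑' k, s k‖ ≤ η * ‖x‖ := by
      set u : H := ∑' k, s k with hu
      by_cases hu0 : u = 0
      · rw [hu0, norm_zero]; positivity
      by_cases hx0 : x = 0
      · exfalso
        apply hu0
        rw [hu]
        have : ∀ k, s k = 0 := by
          intro k
          simp [hs, ha, hx0, inner_zero_right]
        simp [this]
      have hxpos : 0 < ‖x‖ := norm_pos_iff.mpr hx0
      have hupos : 0 < ‖u‖ := norm_pos_iff.mpr hu0
      set t : ℝ := ‖u‖ / ‖x‖ with ht
      have htpos : 0 < t := by positivity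
      set d : ℕ → ℝ := fun k => ⟪u, e k (θ ω)⟫ with hd
      have hd_inner : HasSum (fun k => (η ^ (k + 1) * a k) * d k) (‖u‖ ^ 2) := by
        have h1 := hsumS.hasSum.mapL (innerSL ℝ u)
        have h2 : ∀ k, (innerSL ℝ u) (s k) = (η ^ (k + 1) * a k) * d k := by
          intro k
          simp only [innerSL_apply_apply, hs, real_inner_smul_right, hd]
        have h3 : (innerSL ℝ u) u = ‖u‖ ^ 2 := by
          simp only [innerSL_apply_apply, real_inner_self_eq_norm_sq]
        rw [← h3]
        exact h1.congr_fun fun k => (h2 k).symm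
      have hsuma2 : Summable (fun k => a k ^ 2) := by
        have := Orthonormal.inner_products_summable x (he_on ω)
        refine this.congr fun k => ?_
        rw [Real.norm_eq_abs, sq_abs]
      have hsumd2 : Summable (fun k => d k ^ 2) := by
        have := Orthonormal.inner_products_summable u (he_on (θ ω))
        refine this.congr fun k => ?_
        rw [Real.norm_eq_abs, sq_abs, hd, real_inner_comm]
      have htsa : ∑' k, a k ^ 2 ≤ ‖x‖ ^ 2 := by
        have := Orthonormal.tsum_inner_products_le (x := x) (he_on ω)
        refine le_trans (le_of_eq ?_) this
        congr 1
        funext k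
        rw [Real.norm_eq_abs, sq_abs]
      have htsd : ∑' k, d k ^ 2 ≤ ‖u‖ ^ 2 := by
        have := Orthonormal.tsum_inner_products_le (x := u) (he_on (θ ω))
        refine le_trans (le_of_eq ?_) this
        congr 1
        funext k
        rw [Real.norm_eq_abs, sq_abs, hd, real_inner_comm]
      set st : ℝ := Real.sqrt t with hstdef
      have hstsq : st ^ 2 = t := Real.sq_sqrt htpos.le
      have hstpos : 0 < st := Real.sqrt_pos.mpr htpos
      have hterm : ∀ k, (η ^ (k + 1) * a k) * d k ≤ η / 2 * (t * a k ^ 2 + d k ^ 2 / t) := by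
        intro k
        have h1 : η ^ (k + 1) ≤ η := pow_le_of_le_one hη0.le hη1.le (Nat.succ_ne_zero k)
        have h2 : 2 * (st * |a k|) * (|d k| / st) ≤ (st * |a k|) ^ 2 + (|d k| / st) ^ 2 :=
          two_mul_le_add_sq _ _
        have h3 : (st * |a k|) ^ 2 = t * a k ^ 2 := by rw [mul_pow, hstsq, sq_abs]
        have h4 : (|d k| / st) ^ 2 = d k ^ 2 / t := by rw [div_pow, sq_abs, hstsq]
        have h5 : 2 * (st * |a k|) * (|d k| / st) = 2 * (|a k| * |d k|) := by
          field_simp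
        have h6 : |a k| * |d k| ≤ (t * a k ^ 2 + d k ^ 2 / t) / 2 := by
          rw [h3, h4, h5] at h2
          linarith
        calc (η ^ (k + 1) * a k) * d k ≤ |(η ^ (k + 1) * a k) * d k| := le_abs_self _
          _ = η ^ (k + 1) * (|a k| * |d k|) := by
              rw [abs_mul, abs_mul, abs_of_pos (pow_pos hη0 _)]; ring
          _ ≤ η * (|a k| * |d k|) := mul_le_mul_of_nonneg_right h1 (by positivity)
          _ ≤ η * ((t * a k ^ 2 + d k ^ 2 / t) / 2) := mul_le_mul_of_nonneg_left h6 hη0.le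
          _ = η / 2 * (t * a k ^ 2 + d k ^ 2 / t) := by ring
      have hsumrhs : Summable (fun k => η / 2 * (t * a k ^ 2 + d k ^ 2 / t)) :=
        (((hsuma2.mul_left t).add (hsumd2.div_const t))).mul_left (η / 2)
      have hmain : ‖u‖ ^ 2 ≤ η / 2 * (t * (∑' k, a k ^ 2) + (∑' k, d k ^ 2) / t) := by
        have h1 := hd_inner.tsum_eq
        calc ‖u‖ ^ 2 = ∑' k, (η ^ (k + 1) * a k) * d k := h1.symm
          _ ≤ ∑' k, η / 2 * (t * a k ^ 2 + d k ^ 2 / t) :=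
              Summable.tsum_le_tsum hterm hd_inner.summable hsumrhs
          _ = η / 2 * (t * (∑' k, a k ^ 2) + (∑' k, d k ^ 2) / t) := by
              rw [tsum_mul_left, Summable.tsum_add (hsuma2.mul_left t) (hsumd2.div_const t),
                tsum_mul_left, tsum_div_const]
      have e3 : t * ‖x‖ ^ 2 = ‖u‖ * ‖x‖ := by
        rw [ht]; field_simp
      have e4 : ‖u‖ ^ 2 / t = ‖u‖ * ‖x‖ := by
        rw [ht]; field_simp
      have hfin : ‖u‖ ^ 2 ≤ η * (‖u‖ * ‖x‖) := by
        have e1 : t * (∑' k, a k ^ 2) ≤ t * ‖x‖ ^ 2 := mul_le_mul_of_nonneg_left htsa htpos.le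
        have e2 : (∑' k, d k ^ 2) / t ≤ ‖u‖ ^ 2 / t := by gcongr
        nlinarith [hmain]
      nlinarith [hfin, hupos]
    rw [hDx]
    have h1 : ‖(∑' k, s k) - (∑' k, bb k)‖ ≤ ‖∑' k, s k‖ + ‖∑' k, bb k‖ := norm_sub_le _ _
    have h2 : η * ‖x‖ + 2 * η * ‖x‖ = ε * ‖x‖ := by rw [hηdef]; ring
    linarith
  set T' : Ω → H →L[ℝ] H := fun ω => T ω + D ω with hT'
  -- measurability of D applied to a vector
  have hD_meas : ∀ x : H, Measurable fun ω => D ω x := by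
    intro x
    refine measurable_of_tendsto_metrizable
      (f := fun n ω => ∑ k ∈ Finset.range n, A ω k x) (fun n => ?_)
      (tendsto_pi_nhds.2 fun ω => (hD_apply ω x).tendsto_sum_nat)
    refine Finset.measurable_sum _ fun k _ => ?_
    have m1 : Measurable fun ω => (⟪e k ω, x⟫ : ℝ) := Measurable.inner_const (he_meas k)
    have m2 : Measurable fun ω => e k (θ ω) := (he_meas k).comp θ.measurable
    have m3 : Measurable fun ω => T ω (e k ω) :=
      aux_measurable_nat_comp (g := fun ω m => T ω (b m)) (fun m => hT.meas (b m)) (hns_meas k)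
    have heq : (fun ω => A ω k x)
        = fun ω => η ^ (k + 1) • ((⟪e k ω, x⟫ : ℝ) • e k (θ ω)) - (⟪e k ω, x⟫ : ℝ) • T ω (e k ω) := by
      funext ω
      simp [hA, hR_apply, ContinuousLinearMap.sub_apply, ContinuousLinearMap.smul_apply]
    rw [heq]
    exact ((m1.smul m2).const_smul (η ^ (k + 1))).sub (m1.smul m3)
  -- key evaluation
  have hkey : ∀ ω i, T' ω (e i ω) = η ^ (i + 1) • e i (θ ω) := by
    intro ω i
    have hsingle : HasSum (fun k => A ω k (e i ω)) (A ω i (e i ω)) := by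
      refine hasSum_single i fun k hk => ?_
      have h0 : (⟪e k ω, e i ω⟫ : ℝ) = 0 := (he_on ω).2 hk
      simp [hA, hR_apply, ContinuousLinearMap.sub_apply, ContinuousLinearMap.smul_apply, h0]
    have hDe : D ω (e i ω) = A ω i (e i ω) := (hD_apply ω (e i ω)).unique hsingle
    have h1 : (⟪e i ω, e i ω⟫ : ℝ) = 1 := by
      rw [real_inner_self_eq_norm_sq, he_norm]; norm_num
    rw [hT']
    simp only [ContinuousLinearMap.add_apply, hDe, hA, ContinuousLinearMap.sub_apply,
      ContinuousLinearMap.smul_apply, hR_apply, h1, one_smul]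
    abel
  refine ⟨T', e, ⟨?_, ?_, ?_⟩, ?_, he_meas, ?_⟩
  · intro x
    exact (hT.meas x).add (hD_meas x)
  · -- compactness
    intro ω
    have hpart : ∀ n, IsCompactOperator (⇑(∑ k ∈ Finset.range n, A ω k)) := by
      intro n
      induction n with
      | zero =>
          simp only [Finset.range_zero, Finset.sum_empty]
          exact isCompactOperator_zero
      | succ n ih =>
          rw [Finset.sum_range_succ, ContinuousLinearMap.coe_add']
          refine ih.add ?_
          have h1 : IsCompactOperator (⇑(η ^ (n + 1) • R (e n ω) (e n (θ ω)))) := by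
            rw [ContinuousLinearMap.coe_smul']
            exact (hR_compact (e n ω) (e n (θ ω))).smul (η ^ (n + 1))
          have h2 : IsCompactOperator (⇑(R (e n ω) (T ω (e n ω)))) := hR_compact _ _
          rw [hA, ContinuousLinearMap.coe_sub']
          exact h1.sub h2
    have hcompD : IsCompactOperator (⇑(D ω)) :=
      isCompactOperator_of_tendsto (hD_hasSum ω).tendsto_sum_nat (Eventually.of_forall hpart)
    show IsCompactOperator ⇑(T ω + D ω)
    rw [ContinuousLinearMap.coe_add']
    exact (hT.compact ω).add hcompD
  · -- essential boundedness
    have hM := ae_le_essSup (μ := μ) (f := fun ω => (‖T ω‖₊ : ℝ≥0∞))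
    refine lt_of_le_of_lt
      (essSup_le_of_ae_le (essSup (fun ω => (‖T ω‖₊ : ℝ≥0∞)) μ + ENNReal.ofReal ε) ?_) ?_
    · filter_upwards [hM] with ω hω
      have h1 : ‖T' ω‖ ≤ ‖T ω‖ + ε := by
        have := norm_add_le (T ω) (D ω)
        have := hD_norm ω
        rw [hT']
        simp only []
        linarith [norm_add_le (T ω) (D ω), hD_norm ω]
      calc (‖T' ω‖₊ : ℝ≥0∞) = ENNReal.ofReal ‖T' ω‖ := (ofReal_norm _).symm
        _ ≤ ENNReal.ofReal (‖T ω‖ + ε) := ENNReal.ofReal_le_ofReal h1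
        _ = ENNReal.ofReal ‖T ω‖ + ENNReal.ofReal ε :=
            ENNReal.ofReal_add (norm_nonneg _) hε0.le
        _ = (‖T ω‖₊ : ℝ≥0∞) + ENNReal.ofReal ε := congrArg (· + ENNReal.ofReal ε) (ofReal_norm (T ω))
        _ ≤ essSup (fun ω => (‖T ω‖₊ : ℝ≥0∞)) μ + ENNReal.ofReal ε := by gcongr
    · exact ENNReal.add_lt_top.mpr ⟨hT.bdd, ENNReal.ofReal_lt_top⟩
  · refine Eventually.of_forall fun ω => ?_
    have : T ω - T' ω = -D ω := by rw [hT']; beta_reduce; abel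
    rw [this, norm_neg]
    exact hD_norm ω
  · exact Eventually.of_forall fun ω => ⟨he_on ω, fun i => hkey ω i⟩
end
end

section
/- Let T be a bounded random compact operator with T ∈ 𝒩 and let ε > 0. Then there exists a bounded random compact operator S such that ‖T − S‖_∞ ≤ ε, S(ω) is a finite-rank operator for ℙ-a.e. ω, and for ℙ-a.e. ω one has ‖S^n_ω‖ ≥ (ε/3)^n for every n ∈ ℕ. -/
open MeasureTheory Filter Topology TopologicalSpace
open scoped RealInnerProductSpace ENNReal

noncomputable section

variable {Ω H : Type*}

/-- The cocycle generated by a random operator: `T^0_ω = id`,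
`T^{n+1}_ω = T^n_{θω} ∘ T(ω)`. -/
def cocycle [NormedAddCommGroup H] [NormedSpace ℝ H] (θ : Ω → Ω) (T : Ω → H →L[ℝ] H) :
    ℕ → Ω → H →L[ℝ] H
  | 0, _ => ContinuousLinearMap.id ℝ H
  | n + 1, ω => (cocycle θ T n (θ ω)).comp (T ω)

/-- Membership in `𝒩`: for a.e. `ω`, `(1/n) log ‖T^n_ω‖ → -∞` (with `log 0 = -∞`),
equivalently for every `c : ℝ` eventually `‖T^n_ω‖ ≤ exp (c n)`. -/
def MemNullClass [NormedAddCommGroup H] [NormedSpace ℝ H] [MeasurableSpace Ω] (μ : Measure Ω)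
    (θ : Ω → Ω) (T : Ω → H →L[ℝ] H) : Prop :=
  ∀ᵐ ω ∂μ, ∀ c : ℝ, ∀ᶠ n : ℕ in atTop, ‖cocycle θ T n ω‖ ≤ Real.exp (c * n)

set_option maxHeartbeats 1000000
set_option synthInstance.maxHeartbeats 400000

section Helpers

variable {E : Type*} [NormedAddCommGroup E] [InnerProductSpace ℝ E]

/-- Orthonormal sets in a separable space are countable. -/
lemma orthonormal_countable [SeparableSpace E] {w : Set E}
    (hw : Orthonormal ℝ ((↑) : w → E)) : w.Countable := by
  obtain ⟨D, hDc, hDd⟩ := TopologicalSpace.exists_countable_dense E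
  have key : ∀ i : w, ∃ d ∈ D, dist (i : E) d < 1/2 := by
    intro i
    exact Metric.mem_closure_iff.1 (hDd (i : E)) _ (by norm_num)
  choose d hd hdist using key
  haveI : Countable D := hDc.to_subtype
  have hinj : Function.Injective fun i : w => (⟨d i, hd i⟩ : D) := by
    intro i j hij
    simp only [Subtype.mk_eq_mk] at hij
    by_contra hne
    have h2 : dist (i : E) (j : E) ^ 2 = 2 := by
      rw [dist_eq_norm, @norm_sub_sq_real]
      have hi : ‖(i : E)‖ = 1 := hw.1 i
      have hj : ‖(j : E)‖ = 1 := hw.1 j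
      have hij0 : ⟪(i : E), (j : E)⟫ = 0 := hw.2 hne
      rw [hi, hj, hij0]; ring
    have htri := dist_triangle (i : E) (d i) (j : E)
    rw [hij] at htri
    have h3 : dist (↑i) (d j) < 1/2 := by rw [← hij]; exact hdist i
    have h4 : dist (d j) (j : E) < 1/2 := by rw [dist_comm]; exact hdist j
    nlinarith [dist_nonneg (x := (i:E)) (y := (j:E))]
  exact Set.countable_coe_iff.mp hinj.countable

/-- In a separable infinite-dimensional Hilbert space there is an `ℕ`-indexed
orthonormal family whose partial expansions converge to every vector. -/
lemma exists_orthonormal_nat [CompleteSpace E] [SeparableSpace E]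
    (hinf : ¬ FiniteDimensional ℝ E) :
    ∃ e : ℕ → E, Orthonormal ℝ e ∧ ∀ x : E, HasSum (fun n => ⟪e n, x⟫ • e n) x := by
  obtain ⟨w, b, hb⟩ := exists_hilbertBasis ℝ E
  have hwon : Orthonormal ℝ ((↑) : w → E) := hb ▸ b.orthonormal
  have hcnt : w.Countable := orthonormal_countable hwon
  have hwinf : w.Infinite := by
    intro hfin
    apply hinf
    have hdense := b.dense_span
    rw [hb, Subtype.range_coe] at hdense
    have hfd : FiniteDimensional ℝ (Submodule.span ℝ w) :=
      FiniteDimensional.span_of_finite ℝ hfin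
    have hclosed : IsClosed ((Submodule.span ℝ w : Submodule ℝ E) : Set E) :=
      Submodule.closed_of_finiteDimensional _
    have htop : Submodule.span ℝ w = ⊤ := by
      rw [← hdense]
      exact (hclosed.submodule_topologicalClosure_eq).symm
    exact Module.finite_def.mpr (Submodule.fg_def.mpr ⟨w, hfin, htop⟩)
  haveI : Countable w := hcnt.to_subtype
  haveI : Infinite w := hwinf.to_subtype
  obtain ⟨dnm⟩ := nonempty_denumerable (↥w)
  let g : ℕ ≃ w := (Denumerable.eqv (↥w)).symm
  refine ⟨fun n => ((g n : w) : E), hwon.comp g g.injective, fun x => ?_⟩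
  have hsum : HasSum (fun i : w => ⟪(i : E), x⟫ • (i : E)) x := by
    have := b.hasSum_repr x
    convert this using 2 with i
    rw [b.repr_apply_apply, hb]
  exact (Equiv.hasSum_iff g).mpr hsum

section Proj
variable (e : ℕ → E)

/-- Partial-sum projection onto the first `N` vectors. -/
def projN (N : ℕ) : E →L[ℝ] E :=
  ∑ i ∈ Finset.range N, (innerSL ℝ (e i)).smulRight (e i)

lemma projN_apply (N : ℕ) (x : E) :
    projN e N x = ∑ i ∈ Finset.range N, ⟪e i, x⟫ • e i := by
  simp [projN, ContinuousLinearMap.sum_apply]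

lemma norm_projN_apply_le (he : Orthonormal ℝ e) (N : ℕ) (x : E) :
    ‖projN e N x‖ ≤ ‖x‖ := by
  have hsq : ‖projN e N x‖ ^ 2 = ∑ i ∈ Finset.range N, ⟪e i, x⟫ ^ 2 := by
    rw [← real_inner_self_eq_norm_sq, projN_apply]
    rw [he.inner_sum (fun i => ⟪e i, x⟫) (fun i => ⟪e i, x⟫)]
    simp [sq]
  have hb : ∑ i ∈ Finset.range N, ⟪e i, x⟫ ^ 2 ≤ ‖x‖ ^ 2 := by
    have := he.sum_inner_products_le (s := Finset.range N) x
    simpa [Real.norm_eq_abs, sq_abs] using this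
  have h1 : ‖projN e N x‖ ^ 2 ≤ ‖x‖ ^ 2 := hsq ▸ hb
  exact (abs_le_of_sq_le_sq' h1 (norm_nonneg x)).2

lemma norm_projN_le (he : Orthonormal ℝ e) (N : ℕ) : ‖projN e N‖ ≤ 1 :=
  ContinuousLinearMap.opNorm_le_bound _ zero_le_one fun x => by
    simpa using norm_projN_apply_le e he N x

lemma tendsto_projN (hsum : ∀ x : E, HasSum (fun n => ⟪e n, x⟫ • e n) x) (x : E) :
    Tendsto (fun N => projN e N x) atTop (𝓝 x) := by
  have := (hsum x).tendsto_sum_nat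
  simpa [projN_apply] using this

/-- Finite-rank approximation of a compact operator in operator norm. -/
lemma exists_projN_approx (he : Orthonormal ℝ e)
    (hsum : ∀ x : E, HasSum (fun n => ⟪e n, x⟫ • e n) x)
    (A : E →L[ℝ] E) (hA : IsCompactOperator A) {δ : ℝ} (hδ : 0 < δ) :
    ∃ N, ‖A - (projN e N).comp A‖ ≤ δ := by
  obtain ⟨K, hK, hKsub⟩ := hA.image_closedBall_subset_compact 1
  -- cover K by finitely many δ/4-balls centered in K
  have hcover : K ⊆ ⋃ y : K, Metric.ball (y : E) (δ/4) := by
    intro z hz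
    exact Set.mem_iUnion.2 ⟨⟨z, hz⟩, Metric.mem_ball_self (by linarith)⟩
  obtain ⟨t, ht⟩ := hK.elim_finite_subcover (fun y : K => Metric.ball (y : E) (δ/4))
    (fun _ => Metric.isOpen_ball) hcover
  -- choose N good for all centers
  have hev : ∀ᶠ N in atTop, ∀ y ∈ t, ‖(y : E) - projN e N (y : E)‖ < δ/4 := by
    rw [eventually_all_finset]
    intro y _
    have := tendsto_projN e hsum (y : E)
    have h4 : (0:ℝ) < δ/4 := by linarith
    have := (Metric.tendsto_atTop.1 this) (δ/4) h4
    obtain ⟨N0, hN0⟩ := this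
    refine eventually_atTop.2 ⟨N0, fun n hn => ?_⟩
    have := hN0 n hn
    rwa [dist_comm, dist_eq_norm] at this
  obtain ⟨N, hN⟩ := hev.exists
  refine ⟨N, ContinuousLinearMap.opNorm_le_bound _ hδ.le fun x => ?_⟩
  rcases eq_or_ne x 0 with rfl | hx
  · simp
  · -- reduce to unit vectors
    set u := ‖x‖⁻¹ • x with hu
    have hxpos : (0:ℝ) < ‖x‖ := norm_pos_iff.2 hx
    have hun1 : ‖u‖ = 1 := by
      rw [hu, norm_smul, norm_inv, norm_norm, inv_mul_cancel₀ hxpos.ne']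
    have huball : u ∈ Metric.closedBall (0:E) 1 := by
      simp [hun1]
    have hAu : A u ∈ K := hKsub ⟨u, huball, rfl⟩
    obtain ⟨y, hyt, hy⟩ : ∃ y ∈ t, A u ∈ Metric.ball (y : E) (δ/4) := by
      have := ht hAu
      simpa using this
    have h1 : ‖A u - (y : E)‖ < δ/4 := by
      rw [← dist_eq_norm]; exact hy
    have h2 : ‖(y : E) - projN e N (y : E)‖ < δ/4 := hN y hyt
    have h3 : ‖projN e N ((y : E) - A u)‖ ≤ ‖(y:E) - A u‖ :=
      norm_projN_apply_le e he N _
    have hdecomp : A u - projN e N (A u)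
        = (A u - (y:E)) + ((y:E) - projN e N (y:E)) + projN e N ((y:E) - A u) := by
      simp only [map_sub]
      abel
    have hball : ‖A u - projN e N (A u)‖ ≤ δ := by
      rw [hdecomp]
      have := norm_add₃_le (a := A u - (y:E)) (b := (y:E) - projN e N (y:E))
        (c := projN e N ((y:E) - A u))
      have h4 : ‖(y:E) - A u‖ < δ/4 := by rwa [norm_sub_rev]
      linarith [h3.trans h4.le, this]
    -- scale back
    have hxu : x = ‖x‖ • u := by
      rw [hu, smul_smul, mul_inv_cancel₀ hxpos.ne', one_smul]
    calc ‖(A - (projN e N).comp A) x‖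
        = ‖‖x‖ • (A u - projN e N (A u))‖ := by
          conv_lhs => rw [hxu]
          simp only [ContinuousLinearMap.sub_apply, ContinuousLinearMap.comp_apply,
            _root_.map_smul, smul_sub]
      _ = ‖x‖ * ‖A u - projN e N (A u)‖ := by
          rw [norm_smul, norm_norm]
      _ ≤ ‖x‖ * δ := by
          exact mul_le_mul_of_nonneg_left hball (norm_nonneg x)
      _ = δ * ‖x‖ := mul_comm _ _

/-- A compact operator is small on some vector of an orthonormal sequence. -/
lemma exists_small_on_orthonormal [CompleteSpace E] (he : Orthonormal ℝ e)
    (A : E →L[ℝ] E) (hA : IsCompactOperator A) {δ : ℝ} (hδ : 0 < δ) :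
    ∃ k, ‖A (e k)‖ ≤ δ := by
  by_contra hcon
  push_neg at hcon
  obtain ⟨K, hK, hKsub⟩ := hA.image_closedBall_subset_compact 1
  have hmem : ∀ k, A (e k) ∈ K := fun k =>
    hKsub ⟨e k, by simp [he.1 k], rfl⟩
  obtain ⟨y, hyK, φ, hφ, hconv⟩ := hK.tendsto_subseq hmem
  -- inner products with the adjoint tend to zero
  set z := (ContinuousLinearMap.adjoint A) y with hz
  have hsummable : Summable fun k => ‖⟪e k, z⟫‖ ^ 2 := he.inner_products_summable z
  have hzero : Tendsto (fun k => ‖⟪e k, z⟫‖ ^ 2) atTop (𝓝 0) := hsummable.tendsto_atTop_zero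
  have hzero' : Tendsto (fun k => ⟪e k, z⟫) atTop (𝓝 0) := by
    rw [tendsto_zero_iff_norm_tendsto_zero]
    have := (Real.continuous_sqrt.tendsto 0).comp hzero
    simpa [Function.comp_def, Real.sqrt_sq_eq_abs, Real.norm_eq_abs] using this
  have hyinner : Tendsto (fun j => ⟪y, A (e (φ j))⟫) atTop (𝓝 ⟪y, y⟫) :=
    tendsto_const_nhds.inner hconv
  have hyinner' : Tendsto (fun j => ⟪y, A (e (φ j))⟫) atTop (𝓝 0) := by
    have heq : ∀ k, ⟪y, A (e k)⟫ = ⟪e k, z⟫ := fun k => by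
      rw [hz, ContinuousLinearMap.adjoint_inner_right, real_inner_comm]
    simp only [heq]
    exact hzero'.comp hφ.tendsto_atTop
  have hyy : ⟪y, y⟫ = (0:ℝ) := tendsto_nhds_unique hyinner hyinner'
  have hy0 : y = 0 := by rwa [inner_self_eq_zero] at hyy
  have hnorm : Tendsto (fun j => ‖A (e (φ j))‖) atTop (𝓝 ‖y‖) := hconv.norm
  have hge : δ ≤ ‖y‖ :=
    le_of_tendsto_of_tendsto tendsto_const_nhds hnorm
      (Eventually.of_forall fun j => (hcon (φ j)).le)
  rw [hy0, norm_zero] at hge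
  exact absurd hge (not_le.2 hδ)

end Proj

/-- A continuous linear map with finite-dimensional range is a compact operator. -/
lemma isCompactOperator_of_finiteDimensional_range (A : E →L[ℝ] E)
    (hfd : FiniteDimensional ℝ (LinearMap.range (A : E →ₗ[ℝ] E))) :
    IsCompactOperator A := by
  set W : Submodule ℝ E := LinearMap.range (A : E →ₗ[ℝ] E) with hW
  haveI := hfd
  set A' : E →L[ℝ] W := A.codRestrict W (fun x => LinearMap.mem_range_self _ x) with hA'
  set K : Set E := ((↑) : W → E) '' Metric.closedBall (0 : W) (‖A'‖ + 1) with hK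
  refine ⟨K, ?_, ?_⟩
  · exact (ProperSpace.isCompact_closedBall _ _).image continuous_subtype_val
  · have hball : Metric.ball (0:E) 1 ⊆ A ⁻¹' K := by
      intro x hx
      have hxle : ‖x‖ < 1 := by simpa using hx
      refine ⟨A' x, ?_, rfl⟩
      simp only [Metric.mem_closedBall, dist_zero_right]
      calc ‖A' x‖ ≤ ‖A'‖ * ‖x‖ := A'.le_opNorm x
        _ ≤ ‖A'‖ * 1 := by
            exact mul_le_mul_of_nonneg_left hxle.le (norm_nonneg A')
        _ ≤ ‖A'‖ + 1 := by linarith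
    exact Filter.mem_of_superset (Metric.ball_mem_nhds 0 one_pos) hball

lemma opNorm_le_iff_dense {D : Set E} (hD : Dense D) (B : E →L[ℝ] E) {c : ℝ} (hc : 0 ≤ c) :
    ‖B‖ ≤ c ↔ ∀ x ∈ D, ‖B x‖ ≤ c * ‖x‖ := by
  constructor
  · intro h x _
    exact (B.le_opNorm x).trans (mul_le_mul_of_nonneg_right h (norm_nonneg x))
  · intro h
    refine B.opNorm_le_bound hc fun x => ?_
    have hclosed : IsClosed {y : E | ‖B y‖ ≤ c * ‖y‖} :=
      isClosed_le (B.continuous.norm) (continuous_const.mul continuous_norm)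
    have h2 := closure_minimal (fun y hy => h y hy) hclosed
    rw [hD.closure_eq] at h2
    exact h2 (Set.mem_univ x)


end Helpers

/-- Corollary 3.8 (quantitative form): any `T ∈ 𝒩` can be `ε`-perturbed to a random
finite-rank operator `S` whose cocycle norms satisfy `‖S^n_ω‖ ≥ (ε/3)^n`. -/
theorem null_class_perturbation_finite_rank
    [NormedAddCommGroup H] [InnerProductSpace ℝ H] [CompleteSpace H] [SeparableSpace H]
    [MeasurableSpace H] [BorelSpace H] (hinf : ¬ FiniteDimensional ℝ H)
    [MeasurableSpace Ω] [StandardBorelSpace Ω] (μ : Measure Ω) [IsProbabilityMeasure μ]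
    [NullSingletonClass μ] (θ : Ω ≃ᵐ Ω) (hθ : Ergodic (⇑θ) μ)
    (T : Ω → H →L[ℝ] H) (hT : IsBddRandomCompactOp μ T)
    (hTN : MemNullClass μ (⇑θ) T) (ε : ℝ) (hε : 0 < ε) :
    ∃ S : Ω → H →L[ℝ] H, IsBddRandomCompactOp μ S ∧
      (∀ᵐ ω ∂μ, ‖T ω - S ω‖ ≤ ε) ∧
      (∀ᵐ ω ∂μ, FiniteDimensional ℝ (LinearMap.range (S ω : H →ₗ[ℝ] H))) ∧
      (∀ᵐ ω ∂μ, ∀ n : ℕ, (ε / 3) ^ n ≤ ‖cocycle (⇑θ) S n ω‖) := by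
  classical
  haveI : SecondCountableTopology H := UniformSpace.secondCountable_of_separable H
  obtain ⟨e, he, hsum⟩ := exists_orthonormal_nat hinf
  -- joint measurability of (x, ω) ↦ T ω x
  have hjoint : Measurable (Function.uncurry fun x ω => T ω x) :=
    measurable_uncurry_of_continuous_of_measurable (fun ω => (T ω).continuous) hT.meas
  have hTapp : ∀ {g : Ω → H}, Measurable g → Measurable fun ω => T ω (g ω) := by
    intro g hg
    exact hjoint.comp (hg.prodMk measurable_id)
  obtain ⟨D, hDc, hDd⟩ := TopologicalSpace.exists_countable_dense H
  have hε6 : (0:ℝ) < ε/6 := by linarith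
  -- the truncation index N
  have hexN : ∀ ω, ∃ n, ‖T ω - (projN e n).comp (T ω)‖ ≤ ε/6 := fun ω =>
    exists_projN_approx e he hsum (T ω) (hT.compact ω) hε6
  have hp : ∀ n, MeasurableSet {ω | ‖T ω - (projN e n).comp (T ω)‖ ≤ ε/6} := by
    intro n
    have hset : {ω | ‖T ω - (projN e n).comp (T ω)‖ ≤ ε/6}
        = ⋂ x ∈ D, {ω | ‖T ω x - projN e n (T ω x)‖ ≤ ε/6 * ‖x‖} := by
      ext ω
      simp only [Set.mem_setOf_eq, Set.mem_iInter]
      rw [opNorm_le_iff_dense hDd _ hε6.le]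
      simp [ContinuousLinearMap.sub_apply, ContinuousLinearMap.comp_apply]
    rw [hset]
    refine MeasurableSet.biInter hDc fun x _ => ?_
    have hm : Measurable fun ω => ‖T ω x - projN e n (T ω x)‖ :=
      ((continuous_id.sub (projN e n).continuous).norm.measurable).comp (hT.meas x)
    exact measurableSet_le hm measurable_const
  set N : Ω → ℕ := fun ω => Nat.find (hexN ω) with hN
  have hNspec : ∀ ω, ‖T ω - (projN e (N ω)).comp (T ω)‖ ≤ ε/6 := fun ω => Nat.find_spec (hexN ω)
  have hNmeas : Measurable N := measurable_find hexN hp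
  -- the small-direction index k
  have hexk : ∀ ω, ∃ kk, ‖T ω (e kk)‖ ≤ ε/6 := fun ω =>
    exists_small_on_orthonormal e he (T ω) (hT.compact ω) hε6
  have hpk : ∀ kk, MeasurableSet {ω | ‖T ω (e kk)‖ ≤ ε/6} := fun kk =>
    measurableSet_le (hT.meas (e kk)).norm measurable_const
  set k : Ω → ℕ := fun ω => Nat.find (hexk ω) with hk
  have hkspec : ∀ ω, ‖T ω (e (k ω))‖ ≤ ε/6 := fun ω => Nat.find_spec (hexk ω)
  have hkmeas : Measurable k := measurable_find hexk hpk
  set F : Ω → H →L[ℝ] H := fun ω => (projN e (N ω)).comp (T ω) with hF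
  set v : Ω → H := fun ω => e (k ω) with hv
  have hvmeas : Measurable v := measurable_from_nat.comp hkmeas
  have hvnorm : ∀ ω, ‖v ω‖ = 1 := fun ω => he.1 _
  set S : Ω → H →L[ℝ] H := fun ω =>
    (F ω).comp (ContinuousLinearMap.id ℝ H - (innerSL ℝ (v ω)).smulRight (v ω)) +
      (ε/3) • (innerSL ℝ (v ω)).smulRight (v (θ ω)) with hS
  have hSapp : ∀ ω x, S ω x = F ω (x - ⟪v ω, x⟫ • v ω) + (ε/3) • (⟪v ω, x⟫ • v (θ ω)) := by
    intro ω x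
    simp [hS, ContinuousLinearMap.add_apply, ContinuousLinearMap.comp_apply,
      ContinuousLinearMap.sub_apply, ContinuousLinearMap.smul_apply,
      ContinuousLinearMap.smulRight_apply, innerSL_apply_apply]
  -- norm facts
  have hr1norm : ∀ ω, ‖(innerSL ℝ (v ω)).smulRight (v (θ ω))‖ ≤ 1 := by
    intro ω
    simp only [ContinuousLinearMap.norm_smulRight_apply, innerSL_apply_norm, hvnorm]
    norm_num
  have hr0norm : ∀ ω, ‖(innerSL ℝ (v ω)).smulRight (v ω)‖ ≤ 1 := by
    intro ω
    simp only [ContinuousLinearMap.norm_smulRight_apply, innerSL_apply_norm, hvnorm]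
    norm_num
  have hFnorm : ∀ ω, ‖F ω‖ ≤ ‖T ω‖ := by
    intro ω
    calc ‖F ω‖ ≤ ‖projN e (N ω)‖ * ‖T ω‖ := ContinuousLinearMap.opNorm_comp_le _ _
      _ ≤ 1 * ‖T ω‖ := mul_le_mul_of_nonneg_right (norm_projN_le e he _) (norm_nonneg _)
      _ = ‖T ω‖ := one_mul _
  have hFv : ∀ ω, ‖F ω (v ω)‖ ≤ ε/3 := by
    intro ω
    have h1 : ‖T ω (v ω) - F ω (v ω)‖ ≤ ε/6 := by
      have := (T ω - F ω).le_opNorm (v ω)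
      rw [ContinuousLinearMap.sub_apply, hvnorm, mul_one] at this
      exact this.trans (hNspec ω)
    have h2 : ‖T ω (v ω)‖ ≤ ε/6 := hkspec ω
    calc ‖F ω (v ω)‖ = ‖T ω (v ω) - (T ω (v ω) - F ω (v ω))‖ :=
          (congrArg norm (sub_sub_cancel _ _)).symm
      _ ≤ ‖T ω (v ω)‖ + ‖T ω (v ω) - F ω (v ω)‖ := norm_sub_le _ _
      _ ≤ ε/6 + ε/6 := add_le_add h2 h1
      _ ≤ ε/3 := by linarith
  -- distance to T
  have hTS : ∀ ω, ‖T ω - S ω‖ ≤ ε := by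
    intro ω
    have hdecomp : T ω - S ω = (T ω - F ω) + (F ω).comp ((innerSL ℝ (v ω)).smulRight (v ω))
        - (ε/3) • (innerSL ℝ (v ω)).smulRight (v (θ ω)) := by
      ext x
      simp only [ContinuousLinearMap.sub_apply, ContinuousLinearMap.add_apply,
        ContinuousLinearMap.comp_apply, ContinuousLinearMap.smul_apply,
        ContinuousLinearMap.smulRight_apply, innerSL_apply_apply, ContinuousLinearMap.id_apply,
        hSapp ω x, map_sub, _root_.map_smul]
      abel
    have hcompnorm : ‖(F ω).comp ((innerSL ℝ (v ω)).smulRight (v ω))‖ ≤ ε/3 := by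
      refine ContinuousLinearMap.opNorm_le_bound _ (by linarith) fun x => ?_
      simp only [ContinuousLinearMap.comp_apply, ContinuousLinearMap.smulRight_apply,
        innerSL_apply_apply, _root_.map_smul]
      rw [norm_smul]
      calc ‖⟪v ω, x⟫‖ * ‖F ω (v ω)‖ ≤ (‖v ω‖ * ‖x‖) * (ε/3) := by
            refine mul_le_mul (norm_inner_le_norm _ _) (hFv ω) (norm_nonneg _) ?_
            positivity
        _ = ε/3 * ‖x‖ := by rw [hvnorm, one_mul]; ring
    calc ‖T ω - S ω‖
        ≤ ‖(T ω - F ω) + (F ω).comp ((innerSL ℝ (v ω)).smulRight (v ω))‖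
            + ‖(ε/3) • (innerSL ℝ (v ω)).smulRight (v (θ ω))‖ := by
          rw [hdecomp]; exact norm_sub_le _ _
      _ ≤ (‖T ω - F ω‖ + ‖(F ω).comp ((innerSL ℝ (v ω)).smulRight (v ω))‖)
            + ‖(ε/3) • (innerSL ℝ (v ω)).smulRight (v (θ ω))‖ := by
          exact add_le_add (norm_add_le _ _) le_rfl
      _ ≤ (ε/6 + ε/3) + (ε/3) * 1 := by
          refine add_le_add (add_le_add (hNspec ω) hcompnorm) ?_
          refine (norm_smul_le (ε/3) (((innerSL ℝ) (v ω)).smulRight (v (θ ω)))).trans ?_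
          rw [Real.norm_eq_abs, abs_of_pos (by linarith : (0:ℝ) < ε/3)]
          exact mul_le_mul_of_nonneg_left (hr1norm ω) (by linarith)
      _ ≤ ε := by linarith
  -- measurability of S
  have hPapp : Measurable fun p : H × ℕ => projN e p.2 p.1 :=
    measurable_from_prod_countable_left fun n => (projN e n).continuous.measurable
  have hSmeas : ∀ x : H, Measurable fun ω => S ω x := by
    intro x
    have hinner : Measurable fun ω => ⟪v ω, x⟫ :=
      ((continuous_id.inner continuous_const).measurable).comp hvmeas
    have hsmul1 : Measurable fun ω => ⟪v ω, x⟫ • v ω :=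
      (continuous_smul.measurable).comp (hinner.prodMk hvmeas)
    have hg : Measurable fun ω => x - ⟪v ω, x⟫ • v ω :=
      (continuous_sub.measurable).comp (measurable_const.prodMk hsmul1)
    have hTg : Measurable fun ω => T ω (x - ⟪v ω, x⟫ • v ω) := hTapp hg
    have hFpart : Measurable fun ω => F ω (x - ⟪v ω, x⟫ • v ω) := by
      have : (fun ω => F ω (x - ⟪v ω, x⟫ • v ω))
          = fun ω => projN e (N ω) (T ω (x - ⟪v ω, x⟫ • v ω)) := rfl
      rw [this]
      exact hPapp.comp (hTg.prodMk hNmeas)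
    have hvθ : Measurable fun ω => v (θ ω) := hvmeas.comp θ.measurable
    have hsmul2 : Measurable fun ω => ⟪v ω, x⟫ • v (θ ω) :=
      (continuous_smul.measurable).comp (hinner.prodMk hvθ)
    have hsmul3 : Measurable fun ω => (ε/3) • (⟪v ω, x⟫ • v (θ ω)) :=
      (continuous_smul.measurable).comp (measurable_const.prodMk hsmul2)
    have : (fun ω => S ω x)
        = fun ω => F ω (x - ⟪v ω, x⟫ • v ω) + (ε/3) • (⟪v ω, x⟫ • v (θ ω)) := by
      funext ω; exact hSapp ω x
    rw [this]
    exact (continuous_add.measurable).comp (hFpart.prodMk hsmul3)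
  -- finite rank
  have hrange : ∀ ω, FiniteDimensional ℝ (LinearMap.range (S ω : H →ₗ[ℝ] H)) := by
    intro ω
    set W : Submodule ℝ H :=
      Submodule.span ℝ ((Set.range fun i : Fin (N ω) => e i) ∪ {v (θ ω)}) with hW
    haveI : FiniteDimensional ℝ W :=
      FiniteDimensional.span_of_finite ℝ ((Set.finite_range _).union (Set.finite_singleton _))
    have hmem : ∀ x, S ω x ∈ W := by
      intro x
      rw [hSapp]
      refine Submodule.add_mem _ ?_ ?_
      · have : F ω (x - ⟪v ω, x⟫ • v ω)
            = ∑ i ∈ Finset.range (N ω), ⟪e i, T ω (x - ⟪v ω, x⟫ • v ω)⟫ • e i := by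
          exact projN_apply e (N ω) _
        rw [this]
        refine Submodule.sum_mem _ fun i hi => Submodule.smul_mem _ _ ?_
        refine Submodule.subset_span (Set.mem_union_left _ ?_)
        exact ⟨⟨i, Finset.mem_range.1 hi⟩, rfl⟩
      · refine Submodule.smul_mem _ _ (Submodule.smul_mem _ _ ?_)
        exact Submodule.subset_span (Set.mem_union_right _ rfl)
    have hle : LinearMap.range (S ω : H →ₗ[ℝ] H) ≤ W := by
      rintro y ⟨x, rfl⟩
      exact hmem x
    exact Submodule.finiteDimensional_of_le hle
  have hScompact : ∀ ω, IsCompactOperator (S ω) := fun ω =>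
    isCompactOperator_of_finiteDimensional_range (S ω) (hrange ω)
  -- boundedness
  have hSnorm : ∀ ω, ‖S ω‖ ≤ 2 * ‖T ω‖ + ε/3 := by
    intro ω
    have h1 : ‖(F ω).comp (ContinuousLinearMap.id ℝ H - (innerSL ℝ (v ω)).smulRight (v ω))‖
        ≤ ‖T ω‖ * 2 := by
      calc _ ≤ ‖F ω‖ * ‖ContinuousLinearMap.id ℝ H - (innerSL ℝ (v ω)).smulRight (v ω)‖ :=
            ContinuousLinearMap.opNorm_comp_le _ _
        _ ≤ ‖T ω‖ * 2 := by
            refine mul_le_mul (hFnorm ω) ?_ (norm_nonneg _) (norm_nonneg _)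
            calc ‖ContinuousLinearMap.id ℝ H - (innerSL ℝ (v ω)).smulRight (v ω)‖
                ≤ ‖ContinuousLinearMap.id ℝ H‖ + ‖(innerSL ℝ (v ω)).smulRight (v ω)‖ :=
                  norm_sub_le _ _
              _ ≤ 1 + 1 := add_le_add ContinuousLinearMap.norm_id_le (hr0norm ω)
              _ = 2 := by norm_num
    calc ‖S ω‖ ≤ ‖(F ω).comp (ContinuousLinearMap.id ℝ H - (innerSL ℝ (v ω)).smulRight (v ω))‖
          + ‖(ε/3) • (innerSL ℝ (v ω)).smulRight (v (θ ω))‖ := norm_add_le _ _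
      _ ≤ ‖T ω‖ * 2 + (ε/3) * 1 := by
          refine add_le_add h1 ?_
          refine (norm_smul_le (ε/3) (((innerSL ℝ) (v ω)).smulRight (v (θ ω)))).trans ?_
          rw [Real.norm_eq_abs, abs_of_pos (by linarith : (0:ℝ) < ε/3)]
          exact mul_le_mul_of_nonneg_left (hr1norm ω) (by linarith)
      _ = 2 * ‖T ω‖ + ε/3 := by ring
  have hbdd : essSup (fun ω => (‖S ω‖₊ : ℝ≥0∞)) μ < ⊤ := by
    set M : ℝ≥0∞ := essSup (fun ω => (‖T ω‖₊ : ℝ≥0∞)) μ with hM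
    have hMlt : M < ⊤ := hT.bdd
    have haeT : ∀ᵐ ω ∂μ, (‖T ω‖₊ : ℝ≥0∞) ≤ M := ENNReal.ae_le_essSup _
    set C : ℝ := 2 * M.toReal + ε/3 with hC
    have haeS : ∀ᵐ ω ∂μ, (‖S ω‖₊ : ℝ≥0∞) ≤ ENNReal.ofReal C := by
      filter_upwards [haeT] with ω hω
      have hT1 : ‖T ω‖ ≤ M.toReal := by
        have := ENNReal.toReal_mono hMlt.ne hω
        simpa [ENNReal.coe_toReal] using this
      have hS1 : ‖S ω‖ ≤ C := (hSnorm ω).trans (by rw [hC]; linarith)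
      calc (‖S ω‖₊ : ℝ≥0∞) = ENNReal.ofReal ‖S ω‖ := (ofReal_norm _).symm
        _ ≤ ENNReal.ofReal C := ENNReal.ofReal_le_ofReal hS1
    calc essSup (fun ω => (‖S ω‖₊ : ℝ≥0∞)) μ ≤ ENNReal.ofReal C := essSup_le_of_ae_le _ haeS
      _ < ⊤ := ENNReal.ofReal_lt_top
  -- the cocycle lower bound
  have hvS : ∀ ω, S ω (v ω) = (ε/3) • v (θ ω) := by
    intro ω
    rw [hSapp]
    have h1 : ⟪v ω, v ω⟫ = (1:ℝ) := by
      rw [real_inner_self_eq_norm_sq, hvnorm]; norm_num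
    rw [h1, one_smul, sub_self, map_zero, zero_add, one_smul]
  have hcoc : ∀ n ω, cocycle (⇑θ) S n ω (v ω) = ((ε/3)^n) • v ((⇑θ)^[n] ω) := by
    intro n
    induction n with
    | zero => intro ω; simp [cocycle]
    | succ m ih =>
        intro ω
        show (cocycle (⇑θ) S m (θ ω)).comp (S ω) (v ω) = _
        rw [ContinuousLinearMap.comp_apply, hvS, _root_.map_smul, ih (θ ω),
          smul_smul, ← pow_succ', Function.iterate_succ_apply]
  have hfinal : ∀ ω, ∀ n : ℕ, (ε/3)^n ≤ ‖cocycle (⇑θ) S n ω‖ := by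
    intro ω n
    have h1 := (cocycle (⇑θ) S n ω).le_opNorm (v ω)
    rw [hcoc n ω, hvnorm, mul_one] at h1
    rw [norm_smul, Real.norm_eq_abs, abs_of_nonneg (by positivity : (0:ℝ) ≤ (ε/3)^n),
      hvnorm, mul_one] at h1
    exact h1
  exact ⟨S, ⟨hSmeas, hScompact, hbdd⟩, ae_of_all _ hTS, ae_of_all _ hrange,
    ae_of_all _ hfinal⟩
end
end

section
/- Let T ∈ 𝒩 and ε > 0. Then there exist a bounded random compact operator R, a measurable map h : Ω → H with ‖h(ω)‖ = 1 for ℙ-a.e. ω, and a measurable function γ : Ω → ℝ with |γ(ω)| ≥ ε/3 for ℙ-a.e. ω, such that ‖R − T‖_∞ ≤ ε and R(ω) h(ω) = γ(ω) · h(θω) for ℙ-a.e. ω. -/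
open MeasureTheory Filter Topology TopologicalSpace
open scoped RealInnerProductSpace ENNReal

noncomputable section

variable {Ω H : Type*}

section AuxLemmas
variable [NormedAddCommGroup H] [InnerProductSpace ℝ H] [CompleteSpace H]

lemma exists_orthonormal_seq' (hinf : ¬ FiniteDimensional ℝ H) :
    ∃ e : ℕ → H, Orthonormal ℝ e := by
  obtain ⟨w, b, hb⟩ := exists_hilbertBasis ℝ H
  have horth : Orthonormal ℝ ((↑) : w → H) := hb ▸ b.orthonormal
  have hw : w.Infinite := by
    by_contra hfin
    rw [Set.not_infinite] at hfin
    apply hinf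
    have h1 : FiniteDimensional ℝ (Submodule.span ℝ w) :=
      FiniteDimensional.span_of_finite ℝ hfin
    have h2 : (Submodule.span ℝ w).topologicalClosure = Submodule.span ℝ w :=
      IsClosed.submodule_topologicalClosure_eq
        (Submodule.closed_of_finiteDimensional _)
    have h3 := b.dense_span
    rw [hb, Subtype.range_coe] at h3
    rw [h2] at h3
    haveI := h1
    exact Module.Finite.equiv (LinearEquiv.ofTop _ h3)
  exact ⟨Subtype.val ∘ hw.natEmbedding, horth.comp _ (hw.natEmbedding).injective⟩

lemma inner_tendsto_zero' {e : ℕ → H} (he : Orthonormal ℝ e) (z : H) :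
    Tendsto (fun n => ⟪e n, z⟫) atTop (𝓝 0) := by
  have hs : Summable fun n => ‖⟪e n, z⟫‖ ^ 2 := he.inner_products_summable z
  have h0 := hs.tendsto_atTop_zero
  rw [tendsto_zero_iff_norm_tendsto_zero]
  have hsq : Tendsto (fun n => Real.sqrt (‖⟪e n, z⟫‖ ^ 2)) atTop (𝓝 (Real.sqrt 0)) :=
    (Real.continuous_sqrt.tendsto 0).comp h0
  simpa [Real.sqrt_sq_eq_abs] using hsq

lemma exists_small_image' {e : ℕ → H} (he : Orthonormal ℝ e) {S : H →L[ℝ] H}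
    (hS : IsCompactOperator S) {δ : ℝ} (hδ : 0 < δ) : ∃ n, ‖S (e n)‖ ≤ δ := by
  by_contra hcon
  push_neg at hcon
  obtain ⟨K, hK, hKmem⟩ := hS
  obtain ⟨r, hr, hball⟩ := Metric.mem_nhds_iff.mp hKmem
  set x : ℕ → H := fun n => (r / 2) • e n with hx
  have hxball : ∀ n, x n ∈ Metric.ball (0 : H) r := by
    intro n
    rw [Metric.mem_ball, dist_zero_right, hx]
    simp only [norm_smul, he.1 n, mul_one, Real.norm_eq_abs]
    rw [abs_of_pos (by linarith)]; linarith
  have hxK : ∀ n, S (x n) ∈ K := fun n => hball (hxball n)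
  obtain ⟨y, _, φ, hφ, hconv⟩ := hK.tendsto_subseq hxK
  have h1 : Tendsto (fun i => ⟪S (x (φ i)), y⟫) atTop (𝓝 ⟪y, y⟫) :=
    hconv.inner tendsto_const_nhds
  have h2 : Tendsto (fun n => ⟪S (x n), y⟫) atTop (𝓝 0) := by
    have := (inner_tendsto_zero' he (ContinuousLinearMap.adjoint S y)).const_mul (r / 2)
    rw [mul_zero] at this
    refine this.congr fun n => ?_
    rw [← ContinuousLinearMap.adjoint_inner_right S (x n) y, hx]
    simp [real_inner_smul_left]
  have hy : ⟪y, y⟫ = (0 : ℝ) := tendsto_nhds_unique h1 (h2.comp hφ.tendsto_atTop)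
  have hy0 : y = 0 := by rwa [inner_self_eq_zero] at hy
  have h3 : Tendsto (fun i => ‖S (x (φ i))‖) atTop (𝓝 0) := by
    simpa [hy0] using hconv.norm
  have hge : (r / 2) * δ ≤ (0 : ℝ) := by
    refine ge_of_tendsto h3 (Eventually.of_forall fun i => ?_)
    have : ‖S (x (φ i))‖ = (r / 2) * ‖S (e (φ i))‖ := by
      rw [hx]
      rw [S.map_smul, norm_smul, Real.norm_eq_abs,
        abs_of_pos (by linarith : (0:ℝ) < r / 2)]
    rw [this]
    exact mul_le_mul_of_nonneg_left (hcon (φ i)).le (by linarith)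
  nlinarith

lemma isCompactOperator_smulRight' (f : H →L[ℝ] ℝ) (v : H) :
    IsCompactOperator (f.smulRight v) := by
  refine ⟨(fun t : ℝ => t • v) '' Set.Icc (-(‖f‖ + 1)) (‖f‖ + 1),
    isCompact_Icc.image (continuous_id.smul continuous_const), ?_⟩
  refine Filter.mem_of_superset (Metric.ball_mem_nhds 0 one_pos) ?_
  intro y hy
  rw [Metric.mem_ball, dist_zero_right] at hy
  have hmem : f y ∈ Set.Icc (-(‖f‖ + 1)) (‖f‖ + 1) := by
    rw [Set.mem_Icc, ← abs_le]
    calc |f y| = ‖f y‖ := rfl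
      _ ≤ ‖f‖ * ‖y‖ := f.le_opNorm y
      _ ≤ ‖f‖ * 1 := mul_le_mul_of_nonneg_left hy.le (norm_nonneg f)
      _ ≤ ‖f‖ + 1 := by linarith [norm_nonneg f]
  exact ⟨f y, hmem, (ContinuousLinearMap.smulRight_apply (c := f) (f := v) (x := y)).symm⟩

end AuxLemmas

/-- Proposition 3.7(ii): any random compact operator in `𝒩` can be `ε`-perturbed to one
possessing an invariant unit random vector with growth rate bounded below by `ε/3`. -/
theorem null_class_invariant_direction
    [NormedAddCommGroup H] [InnerProductSpace ℝ H] [CompleteSpace H] [SeparableSpace H]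
    [MeasurableSpace H] [BorelSpace H] (hinf : ¬ FiniteDimensional ℝ H)
    [MeasurableSpace Ω] [StandardBorelSpace Ω] (μ : Measure Ω) [IsProbabilityMeasure μ]
    [NullSingletonClass μ] (θ : Ω ≃ᵐ Ω) (hθ : Ergodic (⇑θ) μ)
    (T : Ω → H →L[ℝ] H) (hT : IsBddRandomCompactOp μ T)
    (hTN : MemNullClass μ (⇑θ) T) (ε : ℝ) (hε : 0 < ε) :
    ∃ (R : Ω → H →L[ℝ] H) (h : Ω → H) (γ : Ω → ℝ),
      IsBddRandomCompactOp μ R ∧ Measurable h ∧ Measurable γ ∧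
      (∀ᵐ ω ∂μ, ‖h ω‖ = 1) ∧ (∀ᵐ ω ∂μ, ε / 3 ≤ |γ ω|) ∧
      (∀ᵐ ω ∂μ, ‖R ω - T ω‖ ≤ ε) ∧
      (∀ᵐ ω ∂μ, R ω (h ω) = γ ω • h (θ ω)) := by
  classical
  haveI : SecondCountableTopology H := UniformSpace.secondCountable_of_separable H
  obtain ⟨e, he⟩ := exists_orthonormal_seq' (H := H) hinf
  have hek : ∀ ω, ∃ n, ‖T ω (e n)‖ ≤ 2 * ε / 3 := fun ω =>
    exists_small_image' he (hT.compact ω) (by linarith)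
  set k : Ω → ℕ := fun ω => Nat.find (hek ω) with hkdef
  have hpm : ∀ n : ℕ, MeasurableSet {ω | ‖T ω (e n)‖ ≤ 2 * ε / 3} :=
    fun n => measurableSet_le (hT.meas (e n)).norm measurable_const
  set h : Ω → H := fun ω => e (k ω) with hhdef
  have hmeas_h : Measurable h :=
    Measurable.find (f := fun n (_ : Ω) => e n) (fun n => measurable_const) hpm hek
  have hmeas_Tk : Measurable fun ω => T ω (e (k ω)) :=
    Measurable.find (f := fun n ω => T ω (e n)) (fun n => hT.meas (e n)) hpm hek
  set v : Ω → H := fun ω => (ε / 3) • h (θ ω) - T ω (e (k ω)) with hvdef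
  have hmeas_v : Measurable v :=
    ((hmeas_h.comp θ.measurable).const_smul (ε / 3)).sub hmeas_Tk
  have hv_norm : ∀ ω, ‖v ω‖ ≤ ε := by
    intro ω
    have h1 : ‖(ε / 3) • h (θ ω)‖ = ε / 3 := by
      rw [norm_smul, Real.norm_eq_abs, abs_of_pos (by linarith), he.1, mul_one]
    have h2 : ‖T ω (e (k ω))‖ ≤ 2 * ε / 3 := Nat.find_spec (hek ω)
    calc ‖v ω‖ ≤ ‖(ε / 3) • h (θ ω)‖ + ‖T ω (e (k ω))‖ := norm_sub_le _ _
      _ ≤ ε / 3 + 2 * ε / 3 := by rw [h1]; linarith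
      _ = ε := by ring
  set R : Ω → H →L[ℝ] H := fun ω => T ω + (innerSL ℝ (h ω)).smulRight (v ω) with hRdef
  have hRT : ∀ ω, ‖R ω - T ω‖ ≤ ε := by
    intro ω
    have : R ω - T ω = (innerSL ℝ (h ω)).smulRight (v ω) := by
      rw [hRdef]; ext x; simp
    rw [this, ContinuousLinearMap.norm_smulRight_apply, innerSL_apply_norm, he.1, one_mul]
    exact hv_norm ω
  refine ⟨R, h, fun _ => ε / 3, ⟨?_, ?_, ?_⟩, hmeas_h, measurable_const,
    Eventually.of_forall fun ω => he.1 _, Eventually.of_forall fun ω => ?_,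
    Eventually.of_forall hRT, Eventually.of_forall fun ω => ?_⟩
  · -- meas
    intro x
    have : (fun ω => R ω x) = fun ω => T ω x + ⟪h ω, x⟫ • v ω := by
      funext ω
      simp [hRdef]
    rw [this]
    exact (hT.meas x).add ((hmeas_h.inner measurable_const).smul hmeas_v)
  · -- compact
    intro ω
    exact (hT.compact ω).add (isCompactOperator_smulRight' _ _)
  · -- bdd
    have hbound : ∀ᵐ ω ∂μ, (‖R ω‖₊ : ℝ≥0∞) ≤
        essSup (fun ω => (‖T ω‖₊ : ℝ≥0∞)) μ + ENNReal.ofReal ε := by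
      filter_upwards [ENNReal.ae_le_essSup (fun ω => (‖T ω‖₊ : ℝ≥0∞))] with ω hω
      have h1 : ‖R ω‖ ≤ ‖T ω‖ + ε := by
        have h2 := norm_add_le (R ω - T ω) (T ω)
        rw [sub_add_cancel] at h2
        linarith [hRT ω]
      calc (‖R ω‖₊ : ℝ≥0∞) ≤ ENNReal.ofReal (‖T ω‖ + ε) := by
            rw [← enorm_eq_nnnorm, ← ofReal_norm]; exact ENNReal.ofReal_le_ofReal h1
        _ = (‖T ω‖₊ : ℝ≥0∞) + ENNReal.ofReal ε := by
            rw [ENNReal.ofReal_add (norm_nonneg _) hε.le, ofReal_norm, enorm_eq_nnnorm]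
        _ ≤ _ := add_le_add_left hω _
    calc essSup (fun ω => (‖R ω‖₊ : ℝ≥0∞)) μ
        ≤ essSup (fun ω => (‖T ω‖₊ : ℝ≥0∞)) μ + ENNReal.ofReal ε :=
          essSup_le_of_ae_le _ hbound
      _ < ⊤ := ENNReal.add_lt_top.mpr ⟨hT.bdd, ENNReal.ofReal_lt_top⟩
  · -- |γ| ≥ ε/3
    rw [abs_of_pos (by linarith : (0:ℝ) < ε / 3)]
  · -- invariance
    have hself : ⟪h ω, h ω⟫ = (1 : ℝ) := by
      rw [real_inner_self_eq_norm_mul_norm, he.1, mul_one]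
    have : R ω (h ω) = T ω (e (k ω)) + ⟪h ω, h ω⟫ • v ω := by
      simp [hRdef, hhdef]
    rw [this, hself, one_smul, hvdef]
    simp
end
end

section
/- Let T be a bounded random compact operator, N ∈ ℕ with N ≥ 1, and V ∈ 𝓕 a measurable set such that V, θV, …, θ^{N−1}V are pairwise disjoint. Let g : Ω → H be a measurable map with ‖g(ω)‖ = 1 for ω ∈ V, and let ε ∈ (0, 1/6). Then there exists a bounded random compact operator S such that: S(ω) = T(ω) for ω ∉ ⋃_{i=0}^{N−1} θ^i V; ‖S(ω) − T(ω)‖ ≤ 3ε + 3ε‖T‖_∞ for ℙ-a.e. ω ∈ ⋃_{i=0}^{N−1} θ^i V; and for ℙ-a.e. ω ∈ V one has ‖S^N_ω g(ω)‖ ≥ ε·‖S^N_ω‖ and ‖S^N_ω‖ ≥ ε^{N+1}. -/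
open MeasureTheory Filter Topology TopologicalSpace
open scoped RealInnerProductSpace ENNReal

noncomputable section

variable {Ω H : Type*}

/-- The essential supremum norm `‖T‖_∞` as a real number. -/
def supNorm [NormedAddCommGroup H] [NormedSpace ℝ H] [MeasurableSpace Ω] (μ : Measure Ω)
    (T : Ω → H →L[ℝ] H) : ℝ :=
  (essSup (fun ω => (‖T ω‖₊ : ℝ≥0∞)) μ).toReal

section Aux

variable [NormedAddCommGroup H] [InnerProductSpace ℝ H]

lemma cocycle_zero (θ : Ω → Ω) (T : Ω → H →L[ℝ] H) (ω : Ω) :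
    cocycle θ T 0 ω = ContinuousLinearMap.id ℝ H := rfl

lemma cocycle_succ (θ : Ω → Ω) (T : Ω → H →L[ℝ] H) (n : ℕ) (ω : Ω) :
    cocycle θ T (n + 1) ω = (cocycle θ T n (θ ω)).comp (T ω) := rfl

lemma cocycle_succ' (θ : Ω → Ω) (T : Ω → H →L[ℝ] H) (n : ℕ) (ω : Ω) :
    cocycle θ T (n + 1) ω = (T (θ^[n] ω)).comp (cocycle θ T n ω) := by
  induction n generalizing ω with
  | zero => ext x; simp [cocycle]
  | succ n ih =>
    ext x
    rw [cocycle_succ, ih (θ ω)]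
    simp [cocycle, Function.iterate_succ_apply]

/-- rank one operator `x ↦ ⟪v, x⟫ • w`. -/
def rk1 (v w : H) : H →L[ℝ] H := (innerSL ℝ v).smulRight w

lemma rk1_apply (v w x : H) : rk1 v w x = ⟪v, x⟫ • w := rfl

lemma rk1_norm (v w : H) : ‖rk1 v w‖ = ‖v‖ * ‖w‖ := by
  rw [rk1, ContinuousLinearMap.norm_smulRight_apply, innerSL_apply_norm]

lemma rk1_comp (A : H →L[ℝ] H) (v w : H) : A.comp (rk1 v w) = rk1 v (A w) := by
  ext x; simp [rk1_apply]

lemma rk1_compact (v w : H) : IsCompactOperator (rk1 v w) := by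
  have hL : IsCompactOperator (fun t : ℝ => t • w) := by
    refine ⟨(fun t : ℝ => t • w) '' Set.Icc (-1) 1,
      (isCompact_Icc).image (by continuity), ?_⟩
    exact Filter.mem_of_superset (Icc_mem_nhds (by norm_num) (by norm_num))
      (Set.subset_preimage_image _ _)
  exact hL.comp_clm (innerSL ℝ v)

/-- the sign used in the norm-growing perturbation -/
def ssgn2 (δ : ℝ) (a c : H) : ℝ := if ‖a + δ • c‖ < ‖a - δ • c‖ then -1 else 1

lemma abs_ssgn2 (δ : ℝ) (a c : H) : |ssgn2 δ a c| = 1 := by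
  rw [ssgn2]; split_ifs <;> simp

lemma norm_add_ssgn2_smul {δ : ℝ} (hδ : 0 ≤ δ) (a c : H) :
    δ * ‖c‖ ≤ ‖a + (ssgn2 δ a c * δ) • c‖ := by
  have hpar := parallelogram_law_with_norm ℝ a (δ • c)
  have hs : ‖δ • c‖ = δ * ‖c‖ := by
    rw [norm_smul, Real.norm_eq_abs, abs_of_nonneg hδ]
  have hδc : 0 ≤ δ * ‖c‖ := mul_nonneg hδ (norm_nonneg c)
  rw [ssgn2]
  split_ifs with h
  · have h1 : ((-1:ℝ) * δ) • c = -(δ • c) := by rw [neg_one_mul, neg_smul]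
    rw [h1, ← sub_eq_add_neg]
    nlinarith [norm_nonneg (a + δ • c), norm_nonneg (a - δ • c), norm_nonneg a]
  · push_neg at h
    rw [one_mul]
    nlinarith [norm_nonneg (a + δ • c), norm_nonneg (a - δ • c), norm_nonneg a]

/-- one step of the norm-growing chain -/
def znext (A : H →L[ℝ] H) (δ : ℝ) (z : H) : H := A z + (ssgn2 δ (A z) z * δ) • z

lemma norm_znext_ge (A : H →L[ℝ] H) {δ : ℝ} (hδ : 0 ≤ δ) (z : H) :
    δ * ‖z‖ ≤ ‖znext A δ z‖ := norm_add_ssgn2_smul hδ (A z) z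

/-- the rank-one perturbation operator along the chain -/
def pertOp (δ : ℝ) (a z : H) : H →L[ℝ] H :=
  (ssgn2 δ a z * (δ * (‖z‖⁻¹ * ‖z‖⁻¹))) • rk1 z z

lemma pertOp_apply (δ : ℝ) (a z x : H) :
    pertOp δ a z x = (ssgn2 δ a z * (δ * (‖z‖⁻¹ * ‖z‖⁻¹))) • (⟪z, x⟫ • z) := rfl

lemma pertOp_apply_self (δ : ℝ) (a z : H) :
    pertOp δ a z z = (ssgn2 δ a z * δ) • z := by
  rcases eq_or_ne z 0 with rfl | hz
  · simp [pertOp_apply]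
  · have hnz : ‖z‖ ≠ 0 := norm_ne_zero_iff.mpr hz
    rw [pertOp_apply, smul_smul, real_inner_self_eq_norm_mul_norm]
    congr 1
    field_simp

lemma pertOp_norm {δ : ℝ} (hδ : 0 ≤ δ) (a z : H) : ‖pertOp δ a z‖ ≤ δ := by
  rcases eq_or_ne z 0 with rfl | hz
  · simp [pertOp, rk1_norm, hδ]
  · have hnz : (0:ℝ) < ‖z‖ := norm_pos_iff.mpr hz
    have h1 : ‖pertOp δ a z‖ ≤
        ‖ssgn2 δ a z * (δ * (‖z‖⁻¹ * ‖z‖⁻¹))‖ * ‖rk1 z z‖ :=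
      ContinuousLinearMap.opNorm_smul_le _ _
    rw [rk1_norm, Real.norm_eq_abs, abs_mul, abs_ssgn2, one_mul,
      abs_of_nonneg (by positivity)] at h1
    rw [show δ * (‖z‖⁻¹ * ‖z‖⁻¹) * (‖z‖ * ‖z‖) = δ * ((‖z‖⁻¹ * ‖z‖) * (‖z‖⁻¹ * ‖z‖)) by ring,
      inv_mul_cancel₀ hnz.ne'] at h1
    simpa using h1

lemma pertOp_compact (δ : ℝ) (a z : H) : IsCompactOperator (pertOp δ a z) := by
  rw [pertOp]
  exact (rk1_compact z z).smul _

end Aux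

section Meas

variable [NormedAddCommGroup H] [InnerProductSpace ℝ H] [MeasurableSpace H] [BorelSpace H]
  [SeparableSpace H] [MeasurableSpace Ω]

lemma measurable_clm_apply {F : Ω → H →L[ℝ] H} (hF : ∀ x : H, Measurable fun ω => F ω x)
    {f : Ω → H} (hf : Measurable f) : Measurable fun ω => F ω (f ω) := by
  classical
  haveI : SecondCountableTopology H := UniformSpace.secondCountable_of_separable H
  have hd := TopologicalSpace.denseRange_denseSeq H
  set d := TopologicalSpace.denseSeq H with hdd
  have tot : ∀ m : ℕ, ∀ ω, ∃ k, dist (f ω) (d k) < 1 / (m + 1 : ℝ) := fun m ω =>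
    hd.exists_dist_lt _ (by positivity)
  have hmeas : ∀ m : ℕ, Measurable fun ω => F ω (d (Nat.find (tot m ω))) := by
    intro m
    exact Measurable.find (fun k => hF (d k))
      (fun k => measurableSet_lt (hf.dist measurable_const) measurable_const) (tot m)
  apply measurable_of_tendsto_metrizable hmeas
  rw [tendsto_pi_nhds]
  intro ω
  rw [tendsto_iff_dist_tendsto_zero]
  have hb : ∀ m : ℕ, dist (F ω (d (Nat.find (tot m ω)))) (F ω (f ω)) ≤
      ‖F ω‖ * (1 / (m + 1 : ℝ)) := by
    intro m
    have hspec := Nat.find_spec (tot m ω)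
    calc dist (F ω (d (Nat.find (tot m ω)))) (F ω (f ω))
        ≤ ‖F ω‖ * dist (d (Nat.find (tot m ω))) (f ω) := by
          rw [dist_eq_norm, dist_eq_norm, ← map_sub]
          exact (F ω).le_opNorm _
      _ ≤ ‖F ω‖ * (1 / (m + 1 : ℝ)) := by
          refine mul_le_mul_of_nonneg_left ?_ (norm_nonneg _)
          rw [dist_comm]; exact hspec.le
  have hlim : Tendsto (fun m : ℕ => ‖F ω‖ * (1 / (m + 1 : ℝ))) atTop (𝓝 0) := by
    have := tendsto_one_div_add_atTop_nhds_zero_nat (𝕜 := ℝ)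
    simpa using this.const_mul ‖F ω‖
  exact squeeze_zero (fun m => dist_nonneg) hb hlim

lemma measurable_cocycle_apply {θ : Ω → Ω} (hθ : Measurable θ) {F : Ω → H →L[ℝ] H}
    (hF : ∀ x : H, Measurable fun ω => F ω x) (n : ℕ) (x : H) :
    Measurable fun ω => cocycle θ F n ω x := by
  induction n generalizing x with
  | zero => simpa [cocycle] using measurable_const
  | succ n ih =>
    simp only [cocycle_succ, ContinuousLinearMap.comp_apply]
    exact measurable_clm_apply (fun y => (ih y).comp hθ) (hF x)

end Meas

section Ball

variable [NormedAddCommGroup H] [InnerProductSpace ℝ H]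

/-- A sequence in the closed unit ball which is dense in it. -/
lemma exists_ball_seq [SeparableSpace H] :
    ∃ b : ℕ → H, (∀ k, ‖b k‖ ≤ 1) ∧
      ∀ x : H, ‖x‖ ≤ 1 → ∀ r : ℝ, 0 < r → ∃ k, ‖b k - x‖ < r := by
  have hd := TopologicalSpace.denseRange_denseSeq H
  set d := TopologicalSpace.denseSeq H with hdd
  refine ⟨fun k => (max 1 ‖d k‖)⁻¹ • d k, fun k => ?_, fun x hx r hr => ?_⟩
  · rw [norm_smul, Real.norm_eq_abs, abs_of_nonneg (by positivity)]
    rw [inv_mul_le_one₀ (by positivity)]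
    · exact le_max_right _ _
  · set t := min r 1 with ht
    have ht0 : 0 < t := lt_min hr one_pos
    have ht1 : t ≤ 1 := min_le_right _ _
    have htr : t ≤ r := min_le_left _ _
    obtain ⟨k, hk⟩ := hd.exists_dist_lt ((1 - t/2) • x) (show (0:ℝ) < t/4 by linarith)
    have hdk : ‖d k‖ < 1 := by
      have h1 : ‖d k - (1 - t/2) • x‖ < t/4 := by rwa [dist_comm, dist_eq_norm] at hk
      have h2 : ‖(1 - t/2) • x‖ ≤ 1 - t/2 := by
        rw [norm_smul, Real.norm_eq_abs, abs_of_nonneg (by linarith)]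
        nlinarith
      calc ‖d k‖ = ‖(d k - (1 - t/2) • x) + (1 - t/2) • x‖ := by
            congr 1; abel
        _ ≤ ‖d k - (1 - t/2) • x‖ + ‖(1 - t/2) • x‖ := norm_add_le _ _
        _ < t/4 + (1 - t/2) := by linarith
        _ ≤ 1 := by linarith
    refine ⟨k, ?_⟩
    have hmax : max 1 ‖d k‖ = 1 := max_eq_left hdk.le
    show ‖(max 1 ‖d k‖)⁻¹ • d k - x‖ < r
    rw [hmax, inv_one, one_smul]
    have h1 : ‖d k - (1 - t/2) • x‖ < t/4 := by rwa [dist_comm, dist_eq_norm] at hk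
    have h2 : ‖(1 - t/2) • x - x‖ ≤ t/2 := by
      have hxx : (1 - t/2) • x - x = (-(t/2)) • x := by
        rw [sub_smul, one_smul, neg_smul]; abel
      rw [hxx, norm_smul, Real.norm_eq_abs, abs_neg, abs_of_nonneg (by linarith)]
      nlinarith
    calc ‖d k - x‖ = ‖(d k - (1 - t/2) • x) + ((1 - t/2) • x - x)‖ := by
          congr 1; abel
      _ ≤ ‖d k - (1 - t/2) • x‖ + ‖(1 - t/2) • x - x‖ := norm_add_le _ _
      _ < t/4 + t/2 := by linarith
      _ < r := by linarith

/-- sup of values on the ball sequence equals operator norm -/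
lemma hA_eq_opNorm {b : ℕ → H} (hb1 : ∀ k, ‖b k‖ ≤ 1)
    (hbd : ∀ x : H, ‖x‖ ≤ 1 → ∀ r : ℝ, 0 < r → ∃ k, ‖b k - x‖ < r)
    (A : H →L[ℝ] H) : (⨆ k, ‖A (b k)‖) = ‖A‖ := by
  have hbdd : BddAbove (Set.range fun k => ‖A (b k)‖) :=
    ⟨‖A‖, by rintro - ⟨k, rfl⟩; exact A.unit_le_opNorm _ (hb1 k)⟩
  refine le_antisymm (ciSup_le fun k => A.unit_le_opNorm _ (hb1 k)) ?_
  have h0 : 0 ≤ ⨆ k, ‖A (b k)‖ :=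
    le_trans (norm_nonneg _) (le_ciSup hbdd 0)
  refine A.opNorm_le_bound h0 fun x => ?_
  rcases eq_or_ne x 0 with rfl | hx
  · simp
  · have hnx : 0 < ‖x‖ := norm_pos_iff.mpr hx
    set y := ‖x‖⁻¹ • x with hy
    have hny : ‖y‖ ≤ 1 := by
      rw [hy, norm_smul, Real.norm_eq_abs, abs_of_nonneg (by positivity),
        inv_mul_cancel₀ hnx.ne']
    have key : ‖A y‖ ≤ ⨆ k, ‖A (b k)‖ := by
      refine le_of_forall_pos_le_add fun η hη => ?_
      obtain ⟨k, hk⟩ := hbd y hny (η / (‖A‖ + 1)) (by positivity)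
      have h1 : ‖A y - A (b k)‖ ≤ ‖A‖ * (η / (‖A‖ + 1)) := by
        rw [← map_sub]
        calc ‖A (y - b k)‖ ≤ ‖A‖ * ‖y - b k‖ := A.le_opNorm _
          _ ≤ ‖A‖ * (η / (‖A‖ + 1)) := by
              refine mul_le_mul_of_nonneg_left ?_ (norm_nonneg _)
              rw [← norm_neg]; simpa [neg_sub] using hk.le
      have h2 : ‖A‖ * (η / (‖A‖ + 1)) ≤ η := by
        rw [div_eq_inv_mul, ← mul_assoc]
        have : ‖A‖ * (‖A‖ + 1)⁻¹ ≤ 1 := by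
          rw [← div_eq_mul_inv, div_le_one (by positivity)]; linarith [norm_nonneg A]
        nlinarith [hη.le]
      have h3 : ‖A (b k)‖ ≤ ⨆ k, ‖A (b k)‖ := le_ciSup hbdd k
      calc ‖A y‖ ≤ ‖A (b k)‖ + ‖A y - A (b k)‖ := by
            have := norm_add_le (A (b k)) (A y - A (b k)); simpa using this
        _ ≤ (⨆ k, ‖A (b k)‖) + η := by linarith
    have hxy : x = ‖x‖ • y := by
      rw [hy, smul_smul, mul_inv_cancel₀ hnx.ne', one_smul]
    have hAx : ‖A x‖ = ‖A y‖ * ‖x‖ := by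
      conv_lhs => rw [hxy]
      rw [A.map_smul, norm_smul, Real.norm_eq_abs, abs_of_nonneg hnx.le, mul_comm]
    rw [hAx]
    exact mul_le_mul_of_nonneg_right key hnx.le

end Ball

set_option maxHeartbeats 1000000 in
/-- Lemma 4.2: perturbation of a random compact operator along a finite tower of disjoint
sets `V, θV, …, θ^{N-1}V`. -/
theorem tower_perturbation
    [NormedAddCommGroup H] [InnerProductSpace ℝ H] [CompleteSpace H] [SeparableSpace H]
    [MeasurableSpace H] [BorelSpace H] (hinf : ¬ FiniteDimensional ℝ H)
    [MeasurableSpace Ω] (μ : Measure Ω) [IsProbabilityMeasure μ]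
    (θ : Ω ≃ᵐ Ω) (hθ : MeasurePreserving (⇑θ) μ μ)
    (T : Ω → H →L[ℝ] H) (hT : IsBddRandomCompactOp μ T)
    (N : ℕ) (hN : 1 ≤ N) (V : Set Ω) (hV : MeasurableSet V)
    (hdisj : ∀ i < N, ∀ j < N, i ≠ j → Disjoint ((⇑θ)^[i] '' V) ((⇑θ)^[j] '' V))
    (g : Ω → H) (hg : Measurable g) (hg1 : ∀ ω ∈ V, ‖g ω‖ = 1)
    (ε : ℝ) (hε : ε ∈ Set.Ioo (0 : ℝ) (1 / 6)) :
    ∃ S : Ω → H →L[ℝ] H, IsBddRandomCompactOp μ S ∧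
      (∀ ω ∉ ⋃ i ∈ Finset.range N, (⇑θ)^[i] '' V, S ω = T ω) ∧
      (∀ᵐ ω ∂μ, ω ∈ ⋃ i ∈ Finset.range N, (⇑θ)^[i] '' V →
        ‖S ω - T ω‖ ≤ 3 * ε + 3 * ε * supNorm μ T) ∧
      (∀ᵐ ω ∂μ, ω ∈ V →
        ε * ‖cocycle (⇑θ) S N ω‖ ≤ ‖cocycle (⇑θ) S N ω (g ω)‖ ∧
        ε ^ (N + 1) ≤ ‖cocycle (⇑θ) S N ω‖) := by
  classical
  haveI : SecondCountableTopology H := UniformSpace.secondCountable_of_separable H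
  obtain ⟨hε0, hε6⟩ := hε
  obtain ⟨n, rfl⟩ : ∃ n, N = n + 1 := ⟨N - 1, (Nat.succ_pred_eq_of_pos hN).symm⟩
  set M := supNorm μ T with hMdef
  have hM0 : 0 ≤ M := ENNReal.toReal_nonneg
  set δ := 3 * ε + 3 * ε * M with hδdef
  have hδpos : 0 < δ := by nlinarith
  have hδ3 : 3 * ε ≤ δ := by nlinarith
  -- a unit vector
  haveI : Nontrivial H := by
    rcases subsingleton_or_nontrivial H with hs | hs
    · exact absurd ⟨by rw [Subsingleton.elim (⊤ : Submodule ℝ H) ⊥]; exact Submodule.fg_bot⟩ hinf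
    · exact hs
  obtain ⟨x0, hx0⟩ := exists_ne (0 : H)
  set e := ‖x0‖⁻¹ • x0 with hedef
  have he : ‖e‖ = 1 := by
    rw [hedef, norm_smul, Real.norm_eq_abs, abs_of_nonneg (by positivity),
      inv_mul_cancel₀ (norm_ne_zero_iff.mpr hx0)]
  obtain ⟨b, hb1, hbd⟩ := exists_ball_seq (H := H)
  -- the tower sets
  have hitm : ∀ i : ℕ, Measurable (⇑θ)^[i] := fun i => θ.measurable.iterate i
  have hitm' : ∀ i : ℕ, Measurable (⇑θ.symm)^[i] := fun i => θ.symm.measurable.iterate i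
  have hWpre : ∀ i : ℕ, (⇑θ)^[i] '' V = (⇑θ.symm)^[i] ⁻¹' V := by
    intro i; ext x
    constructor
    · rintro ⟨v, hv, rfl⟩
      have h := (Function.LeftInverse.iterate θ.symm_apply_apply i) v
      simpa [h] using hv
    · intro hx
      exact ⟨(⇑θ.symm)^[i] x, hx, (Function.LeftInverse.iterate θ.apply_symm_apply i) x⟩
  have hWmeas : ∀ i, MeasurableSet ((⇑θ)^[i] '' V) := fun i => by
    rw [hWpre i]; exact (hitm' i) hV
  have hW0 : (⇑θ)^[0] '' V = V := by simp
  have hWdisj : ∀ ω₀ ∈ V, ∀ i, i < n + 1 → 1 ≤ i → (⇑θ)^[i] ω₀ ∉ V := by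
    intro ω₀ h0 i hi h1 hmem
    have h1' : (⇑θ)^[i] ω₀ ∈ (⇑θ)^[i] '' V := Set.mem_image_of_mem _ h0
    have hd := hdisj i hi 0 (by omega) (by omega)
    rw [hW0] at hd
    exact hd.ne_of_mem h1' hmem rfl
  have hWuniq : ∀ ω₀ ∈ V, ∀ i j, i < n + 1 → j < n + 1 → i ≠ j →
      (⇑θ)^[i] ω₀ ∉ (⇑θ)^[j] '' V := by
    intro ω₀ h0 i j hi hj hne hmem
    exact (hdisj i hi j hj hne).ne_of_mem (Set.mem_image_of_mem _ h0) hmem rfl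
  -- helper: constant smul is measurable
  have hsm : ∀ (c : ℝ) {f : Ω → H}, Measurable f → Measurable fun ω => c • f ω :=
    fun c f hf => ((continuous_const_smul c).measurable).comp hf
  -- the norm-growing chain
  obtain ⟨zv, hzv0, hzvS⟩ : ∃ zv : ℕ → Ω → H, (∀ ω, zv 0 ω = e) ∧
      ∀ j ω, zv (j + 1) ω = znext (T ((⇑θ)^[j + 1] ω)) δ (zv j ω) :=
    ⟨fun j => Nat.rec (fun _ => e) (fun j zj ω => znext (T ((⇑θ)^[j + 1] ω)) δ (zj ω)) j,
      fun _ => rfl, fun j ω => rfl⟩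
  have hzmeas : ∀ j, Measurable (zv j) := by
    intro j; induction j with
    | zero =>
      have h0 : zv 0 = fun _ => e := funext hzv0
      rw [h0]; exact measurable_const
    | succ j ih =>
      have hzeq : zv (j + 1) = fun ω => znext (T ((⇑θ)^[j + 1] ω)) δ (zv j ω) :=
        funext (hzvS j)
      rw [hzeq]
      have hTz : Measurable fun ω => T ((⇑θ)^[j + 1] ω) (zv j ω) :=
        measurable_clm_apply (fun x => (hT.meas x).comp (hitm (j + 1))) ih
      unfold znext ssgn2
      have hc : MeasurableSet {ω | ‖T ((⇑θ)^[j+1] ω) (zv j ω) + δ • zv j ω‖ <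
          ‖T ((⇑θ)^[j+1] ω) (zv j ω) - δ • zv j ω‖} :=
        measurableSet_lt ((hTz.add (hsm δ ih)).norm) ((hTz.sub (hsm δ ih)).norm)
      exact hTz.add ((((Measurable.ite hc measurable_const measurable_const).mul
        measurable_const)).smul ih)
  have hznorm : ∀ j, ∀ ω, δ ^ j ≤ ‖zv j ω‖ := by
    intro j; induction j with
    | zero => intro ω; simp [hzv0 ω, he]
    | succ j ih =>
      intro ω
      rw [hzvS j ω]
      calc δ ^ (j + 1) = δ * δ ^ j := by rw [pow_succ]; ring
        _ ≤ δ * ‖zv j ω‖ := mul_le_mul_of_nonneg_left (ih ω) hδpos.le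
        _ ≤ ‖znext (T ((⇑θ)^[j + 1] ω)) δ (zv j ω)‖ := norm_znext_ge _ hδpos.le _
  -- the perturbations at levels 1..n
  set E : ℕ → Ω → (H →L[ℝ] H) := fun i ω' =>
    pertOp δ (T ω' (zv (i - 1) ((⇑θ.symm)^[i] ω'))) (zv (i - 1) ((⇑θ.symm)^[i] ω')) with hEdef
  have hEmeas : ∀ i (x : H), Measurable fun ω' => E i ω' x := by
    intro i x
    have hzb : Measurable fun ω' => zv (i - 1) ((⇑θ.symm)^[i] ω') :=
      (hzmeas (i - 1)).comp (hitm' i)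
    have ha : Measurable fun ω' => T ω' (zv (i - 1) ((⇑θ.symm)^[i] ω')) :=
      measurable_clm_apply hT.meas hzb
    simp only [hEdef, pertOp_apply]
    unfold ssgn2
    have hc : MeasurableSet {ω' | ‖T ω' (zv (i-1) ((⇑θ.symm)^[i] ω')) +
        δ • zv (i-1) ((⇑θ.symm)^[i] ω')‖ < ‖T ω' (zv (i-1) ((⇑θ.symm)^[i] ω')) -
        δ • zv (i-1) ((⇑θ.symm)^[i] ω')‖} :=
      measurableSet_lt ((ha.add (hsm δ hzb)).norm) ((ha.sub (hsm δ hzb)).norm)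
    exact (((Measurable.ite hc measurable_const measurable_const).mul
      ((measurable_const.mul (hzb.norm.inv.mul hzb.norm.inv)))).smul
      ((hzb.inner measurable_const).smul hzb))
  have hEnorm : ∀ i ω', ‖E i ω'‖ ≤ δ := by
    intro i ω'; simp only [hEdef]; exact pertOp_norm hδpos.le _ _
  -- first-stage perturbed operator
  set S1 : Ω → H →L[ℝ] H := fun ω =>
    T ω + ∑ i ∈ Finset.Ico 1 (n + 1), Set.indicator ((⇑θ)^[i] '' V) (E i) ω with hS1def
  have hindS : ∀ (s : Set Ω) (Fn : Ω → H →L[ℝ] H) (ω : Ω) (x : H),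
      (Set.indicator s Fn ω) x = Set.indicator s (fun ω => Fn ω x) ω := by
    intro s Fn ω x; by_cases h : ω ∈ s <;> simp [h]
  have hS1meas : ∀ x, Measurable fun ω => S1 ω x := by
    intro x
    have heq : ∀ ω, S1 ω x = T ω x + ∑ i ∈ Finset.Ico 1 (n + 1),
        Set.indicator ((⇑θ)^[i] '' V) (fun ω' => E i ω' x) ω := by
      intro ω
      rw [hS1def]
      simp only [ContinuousLinearMap.add_apply, ContinuousLinearMap.sum_apply]
      congr 1
      exact Finset.sum_congr rfl fun i _ => hindS _ _ ω x
    simp only [heq]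
    exact (hT.meas x).add
      (Finset.measurable_sum _ fun i _ => (hEmeas i x).indicator (hWmeas i))
  -- S1 = T plus one perturbation on the tower levels
  have hS1_on : ∀ ω₀ ∈ V, ∀ i, 1 ≤ i → i ≤ n →
      S1 ((⇑θ)^[i] ω₀) = T ((⇑θ)^[i] ω₀) + E i ((⇑θ)^[i] ω₀) := by
    intro ω₀ h0 i h1 h2
    simp only [hS1def]
    congr 1
    rw [Finset.sum_eq_single_of_mem i (Finset.mem_Ico.mpr ⟨h1, by omega⟩)]
    · exact Set.indicator_of_mem (Set.mem_image_of_mem _ h0) _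
    · intro i' hi' hne
      rw [Finset.mem_Ico] at hi'
      exact Set.indicator_of_notMem
        (hWuniq ω₀ h0 i i' (by omega) (by omega) (Ne.symm hne)) _
  have hsumV : ∀ ω ∈ V,
      (∑ i ∈ Finset.Ico 1 (n + 1), Set.indicator ((⇑θ)^[i] '' V) (E i) ω) = 0 := by
    intro ω hv
    refine Finset.sum_eq_zero fun i hi => ?_
    rw [Finset.mem_Ico] at hi
    refine Set.indicator_of_notMem (fun hmem => ?_) _
    have hd := hdisj 0 (by omega) i (by omega) (by omega)
    rw [hW0] at hd
    exact hd.ne_of_mem hv hmem rfl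
  have hS1_V : ∀ ω ∈ V, S1 ω = T ω := by
    intro ω hv; simp only [hS1def]; rw [hsumV ω hv, add_zero]
  -- chain identity
  have hchain : ∀ ω₀ ∈ V, ∀ j, j ≤ n → cocycle (⇑θ) S1 j (θ ω₀) e = zv j ω₀ := by
    intro ω₀ h0 j
    induction j with
    | zero =>
      intro _
      rw [cocycle_zero, hzv0]
      rfl
    | succ j ih =>
      intro hj
      rw [cocycle_succ', ContinuousLinearMap.comp_apply, ih (by omega)]
      have hpt : (⇑θ)^[j] (θ ω₀) = (⇑θ)^[j + 1] ω₀ :=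
        (Function.iterate_succ_apply (⇑θ) j ω₀).symm
      rw [hpt, hS1_on ω₀ h0 (j + 1) (by omega) (by omega)]
      have hback : (⇑θ.symm)^[j + 1] ((⇑θ)^[j + 1] ω₀) = ω₀ :=
        (Function.LeftInverse.iterate θ.symm_apply_apply (j + 1)) ω₀
      rw [ContinuousLinearMap.add_apply]
      have hE : E (j + 1) ((⇑θ)^[j + 1] ω₀) (zv j ω₀) =
          (ssgn2 δ (T ((⇑θ)^[j+1] ω₀) (zv j ω₀)) (zv j ω₀) * δ) • zv j ω₀ := by
        simp only [hEdef, Nat.add_sub_cancel, hback]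
        exact pertOp_apply_self δ _ _
      rw [hE, hzvS j ω₀]
      rfl
  -- the tail operator
  set A1 : Ω → H →L[ℝ] H := fun ω => cocycle (⇑θ) S1 n (θ ω) with hA1def
  have hA1meas : ∀ x, Measurable fun ω => A1 ω x := fun x =>
    (measurable_cocycle_apply θ.measurable hS1meas n x).comp θ.measurable
  have hcan : ∀ ω₀ ∈ V, δ ^ n ≤ ‖A1 ω₀‖ := by
    intro ω₀ h0
    calc δ ^ n ≤ ‖zv n ω₀‖ := hznorm n ω₀
      _ = ‖A1 ω₀ e‖ := by rw [hA1def, hchain ω₀ h0 n le_rfl]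
      _ ≤ ‖A1 ω₀‖ := (A1 ω₀).unit_le_opNorm e he.le
  -- selection of a near-maximizing ball vector
  set hAs : Ω → ℝ := fun ω => ⨆ k, ‖A1 ω (b k)‖ with hAsdef
  have hAsmeas : Measurable hAs := Measurable.iSup fun k => (hA1meas (b k)).norm
  have hAs_eq : ∀ ω, hAs ω = ‖A1 ω‖ := fun ω => hA_eq_opNorm hb1 hbd (A1 ω)
  have utot : ∀ ω, ∃ k, hAs ω < 2 * ‖A1 ω (b k)‖ ∨ ¬(0 < hAs ω) := by
    intro ω
    by_cases h : 0 < hAs ω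
    · have h2 : hAs ω / 2 < hAs ω := by linarith
      rw [hAsdef] at h2
      obtain ⟨k, hk⟩ := exists_lt_of_lt_ciSup h2
      exact ⟨k, Or.inl (by rw [hAsdef]; linarith)⟩
    · exact ⟨0, Or.inr h⟩
  set u : Ω → H := fun ω => if 0 < hAs ω then b (Nat.find (utot ω)) else 0 with hudef
  have humeas : Measurable u := by
    have hrfl : u = fun ω => (fun k ω => if 0 < hAs ω then b k else 0) (Nat.find (utot ω)) ω :=
      rfl
    rw [hrfl]
    refine Measurable.find
      (fun k => Measurable.ite (measurableSet_lt measurable_const hAsmeas)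
        measurable_const measurable_const)
      (fun k => ?_) utot
    have : {x | hAs x < 2 * ‖A1 x (b k)‖ ∨ ¬(0 < hAs x)} =
        {x | hAs x < 2 * ‖A1 x (b k)‖} ∪ {x | 0 < hAs x}ᶜ := by
      ext x; simp [Set.mem_union]
    rw [this]
    exact (measurableSet_lt hAsmeas ((hA1meas (b k)).norm.const_mul 2)).union
      (measurableSet_lt measurable_const hAsmeas).compl
  have hu1 : ∀ ω, ‖u ω‖ ≤ 1 := by
    intro ω; simp only [hudef]
    split_ifs
    · exact hb1 _
    · simp
  have huA : ∀ ω₀ ∈ V, ‖A1 ω₀‖ < 2 * ‖A1 ω₀ (u ω₀)‖ := by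
    intro ω₀ h0
    have hpos : 0 < hAs ω₀ := by
      rw [hAs_eq]
      exact lt_of_lt_of_le (pow_pos hδpos n) (hcan ω₀ h0)
    have hval : u ω₀ = b (Nat.find (utot ω₀)) := by simp only [hudef]; exact if_pos hpos
    have hspec := Nat.find_spec (utot ω₀)
    rcases hspec with hlt | hbad
    · rw [hval, ← hAs_eq ω₀]; exact hlt
    · exact absurd hpos hbad
  -- level-0 perturbation
  set s0 : Ω → ℝ := fun ω => ssgn2 δ (A1 ω (T ω (g ω))) (A1 ω (u ω)) with hs0def
  have hs0meas : Measurable s0 := by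
    have ha : Measurable fun ω => A1 ω (T ω (g ω)) :=
      measurable_clm_apply hA1meas (measurable_clm_apply hT.meas hg)
    have hc : Measurable fun ω => A1 ω (u ω) := measurable_clm_apply hA1meas humeas
    simp only [hs0def]; unfold ssgn2
    exact Measurable.ite
      (measurableSet_lt ((ha.add (hsm δ hc)).norm) ((ha.sub (hsm δ hc)).norm))
      measurable_const measurable_const
  have habs_s0 : ∀ ω, |s0 ω| = 1 := fun ω => abs_ssgn2 _ _ _
  set E0 : Ω → H →L[ℝ] H := fun ω => (s0 ω * δ) • rk1 (g ω) (u ω) with hE0def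
  have hE0meas : ∀ x, Measurable fun ω => E0 ω x := by
    intro x
    have heq : ∀ ω, E0 ω x = (s0 ω * δ) • (⟪g ω, x⟫ • u ω) := fun ω => rfl
    simp only [heq]
    exact ((hs0meas.mul measurable_const).smul ((hg.inner measurable_const).smul humeas))
  set S : Ω → H →L[ℝ] H := fun ω => S1 ω + Set.indicator V E0 ω with hSdef
  have hSmeas : ∀ x, Measurable fun ω => S ω x := by
    intro x
    have heq : ∀ ω, S ω x = S1 ω x + Set.indicator V (fun ω => E0 ω x) ω := by
      intro ω; rw [hSdef, ContinuousLinearMap.add_apply, hindS]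
    simp only [heq]
    exact (hS1meas x).add ((hE0meas x).indicator hV)
  -- difference bound
  have hdiff : ∀ ω, ‖S ω - T ω‖ ≤ δ := by
    intro ω
    have hrw : S ω - T ω =
        (∑ i ∈ Finset.Ico 1 (n + 1), Set.indicator ((⇑θ)^[i] '' V) (E i) ω) +
          Set.indicator V E0 ω := by
      simp only [hSdef, hS1def]; abel
    rw [hrw]
    by_cases hv : ω ∈ V
    · rw [hsumV ω hv, zero_add, Set.indicator_of_mem hv]
      have h1 : ‖E0 ω‖ ≤ ‖s0 ω * δ‖ * ‖rk1 (g ω) (u ω)‖ := by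
        simp only [hE0def]; exact ContinuousLinearMap.opNorm_smul_le _ _
      rw [rk1_norm, Real.norm_eq_abs, abs_mul, habs_s0, one_mul,
        abs_of_nonneg hδpos.le, hg1 ω hv, one_mul] at h1
      calc ‖E0 ω‖ ≤ δ * ‖u ω‖ := h1
        _ ≤ δ * 1 := mul_le_mul_of_nonneg_left (hu1 ω) hδpos.le
        _ = δ := mul_one δ
    · rw [Set.indicator_of_notMem hv, add_zero]
      by_cases hex : ∃ i, 1 ≤ i ∧ i ≤ n ∧ ω ∈ (⇑θ)^[i] '' V
      · obtain ⟨i, h1, h2, hmem⟩ := hex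
        rw [Finset.sum_eq_single_of_mem i (Finset.mem_Ico.mpr ⟨h1, by omega⟩)]
        · rw [Set.indicator_of_mem hmem]; exact hEnorm i ω
        · intro i' hi' hne
          rw [Finset.mem_Ico] at hi'
          refine Set.indicator_of_notMem (fun hmem' => ?_) _
          obtain ⟨v, hvV, rfl⟩ := hmem
          exact hWuniq v hvV i i' (by omega) (by omega) (Ne.symm hne) hmem'
      · push_neg at hex
        rw [Finset.sum_eq_zero]
        · simpa using hδpos.le
        · intro i hi
          rw [Finset.mem_Ico] at hi
          by_cases hone : ω ∈ (⇑θ)^[i] '' V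
          · exact absurd hone (hex i hi.1 (by omega))
          · exact Set.indicator_of_notMem hone _
  -- compactness
  have hcomp : ∀ ω, IsCompactOperator (S ω) := by
    intro ω
    have hEc : ∀ i, IsCompactOperator ⇑(Set.indicator ((⇑θ)^[i] '' V) (E i) ω) := by
      intro i
      by_cases h : ω ∈ (⇑θ)^[i] '' V
      · rw [Set.indicator_of_mem h]; simp only [hEdef]; exact pertOp_compact _ _ _
      · rw [Set.indicator_of_notMem h]
        exact isCompactOperator_zero
    have hsumc : IsCompactOperator
        ⇑(∑ i ∈ Finset.Ico 1 (n + 1), Set.indicator ((⇑θ)^[i] '' V) (E i) ω) := by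
      classical
      exact Finset.sum_induction (fun i => Set.indicator ((⇑θ)^[i] '' V) (E i) ω)
        (fun f : H →L[ℝ] H => IsCompactOperator ⇑f)
        (fun a b ha hb => ha.add hb) isCompactOperator_zero (fun i _ => hEc i)
    have hE0c : IsCompactOperator ⇑(Set.indicator V E0 ω) := by
      by_cases h : ω ∈ V
      · rw [Set.indicator_of_mem h]; simp only [hE0def]
        exact (rk1_compact _ _).smul _
      · rw [Set.indicator_of_notMem h]
        exact isCompactOperator_zero
    simp only [hSdef, hS1def]
    exact ((hT.compact ω).add hsumc).add hE0c
  -- a.e. bound on ‖T‖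
  have hTae : ∀ᵐ ω ∂μ, ‖T ω‖ ≤ M := by
    filter_upwards [ENNReal.ae_le_essSup (fun ω => (‖T ω‖₊ : ℝ≥0∞))] with ω hω
    have h := ENNReal.toReal_mono hT.bdd.ne hω
    simpa [hMdef, supNorm] using h
  -- essential boundedness of S
  have hSbdd : essSup (fun ω => (‖S ω‖₊ : ℝ≥0∞)) μ < ⊤ := by
    have hpt : ∀ᵐ ω ∂μ, (‖S ω‖₊ : ℝ≥0∞) ≤
        essSup (fun ω => (‖T ω‖₊ : ℝ≥0∞)) μ + ENNReal.ofReal δ := by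
      filter_upwards [ENNReal.ae_le_essSup (fun ω => (‖T ω‖₊ : ℝ≥0∞))] with ω hω
      have h1 : ‖S ω‖ ≤ ‖T ω‖ + δ := by
        have h2 := hdiff ω
        calc ‖S ω‖ = ‖T ω + (S ω - T ω)‖ := by congr 1; abel
          _ ≤ ‖T ω‖ + ‖S ω - T ω‖ := norm_add_le _ _
          _ ≤ ‖T ω‖ + δ := by linarith
      calc (‖S ω‖₊ : ℝ≥0∞) = ENNReal.ofReal ‖S ω‖ := (ofReal_norm _).symm
        _ ≤ ENNReal.ofReal (‖T ω‖ + δ) := ENNReal.ofReal_le_ofReal h1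
        _ = ENNReal.ofReal ‖T ω‖ + ENNReal.ofReal δ :=
            ENNReal.ofReal_add (norm_nonneg _) hδpos.le
        _ = (‖T ω‖₊ : ℝ≥0∞) + ENNReal.ofReal δ := by rw [ofReal_norm]; rfl
        _ ≤ _ := add_le_add_left hω _
    calc essSup (fun ω => (‖S ω‖₊ : ℝ≥0∞)) μ
        ≤ essSup (fun _ => essSup (fun ω => (‖T ω‖₊ : ℝ≥0∞)) μ + ENNReal.ofReal δ) μ :=
          essSup_mono_ae hpt
      _ = essSup (fun ω => (‖T ω‖₊ : ℝ≥0∞)) μ + ENNReal.ofReal δ := essSup_const' _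
      _ < ⊤ := ENNReal.add_lt_top.mpr ⟨hT.bdd, ENNReal.ofReal_lt_top⟩
  -- the cocycles of S and S1 agree above level 0
  have hSS1 : ∀ ω₀ ∈ V, ∀ j, j ≤ n →
      cocycle (⇑θ) S j (θ ω₀) = cocycle (⇑θ) S1 j (θ ω₀) := by
    intro ω₀ h0 j
    induction j with
    | zero => intro _; rfl
    | succ j ih =>
      intro hj
      rw [cocycle_succ', cocycle_succ', ih (by omega)]
      congr 1
      have hpt : (⇑θ)^[j] (θ ω₀) = (⇑θ)^[j + 1] ω₀ :=
        (Function.iterate_succ_apply (⇑θ) j ω₀).symm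
      rw [hpt]
      simp only [hSdef]
      rw [Set.indicator_of_notMem (hWdisj ω₀ h0 (j + 1) (by omega) (by omega)), add_zero]
  refine ⟨S, ⟨hSmeas, hcomp, hSbdd⟩, ?_, ?_, ?_⟩
  · -- S = T off the tower
    intro ω hω
    have hnot : ∀ i, i ≤ n → ω ∉ (⇑θ)^[i] '' V := by
      intro i hi hmem
      exact hω (Set.mem_biUnion (Finset.mem_range.mpr (by omega)) hmem)
    have h0 : ω ∉ V := by
      have := hnot 0 (by omega); rwa [hW0] at this
    simp only [hSdef, hS1def]
    rw [Set.indicator_of_notMem h0, add_zero, Finset.sum_eq_zero, add_zero]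
    intro i hi
    rw [Finset.mem_Ico] at hi
    exact Set.indicator_of_notMem (hnot i (by omega)) _
  · -- norm of difference
    refine ae_of_all _ fun ω _ => ?_
    have h := hdiff ω
    rw [hδdef] at h
    exact h
  · -- main estimates on V
    filter_upwards [hTae] with ω hTω hmemV
    have hgw : ‖g ω‖ = 1 := hg1 ω hmemV
    have hcoN : cocycle (⇑θ) S (n + 1) ω = (A1 ω).comp (S ω) := by
      rw [cocycle_succ, hSS1 ω hmemV n le_rfl]
    have hSω : S ω = T ω + E0 ω := by
      simp only [hSdef]
      rw [Set.indicator_of_mem hmemV, hS1_V ω hmemV]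
    have hCNg : cocycle (⇑θ) S (n + 1) ω (g ω) =
        A1 ω (T ω (g ω)) + (s0 ω * δ) • A1 ω (u ω) := by
      rw [hcoN, ContinuousLinearMap.comp_apply, hSω, ContinuousLinearMap.add_apply, map_add]
      congr 1
      have h1 : E0 ω (g ω) = (s0 ω * δ) • u ω := by
        simp only [hE0def]
        show (s0 ω * δ) • (⟪g ω, g ω⟫ • u ω) = (s0 ω * δ) • u ω
        rw [real_inner_self_eq_norm_mul_norm, hgw, one_mul, one_smul]
      rw [h1]
      exact (A1 ω).map_smul _ _
    have hlowg : δ * ‖A1 ω (u ω)‖ ≤ ‖cocycle (⇑θ) S (n + 1) ω (g ω)‖ := by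
      rw [hCNg, hs0def]
      exact norm_add_ssgn2_smul hδpos.le _ _
    have hupper : ‖cocycle (⇑θ) S (n + 1) ω‖ ≤ ‖A1 ω‖ * M + δ * ‖A1 ω (u ω)‖ := by
      rw [hcoN, hSω, ContinuousLinearMap.comp_add]
      refine le_trans (norm_add_le _ _) (add_le_add ?_ ?_)
      · exact le_trans ((A1 ω).opNorm_comp_le (T ω))
          (mul_le_mul_of_nonneg_left hTω (norm_nonneg _))
      · have h1 : (A1 ω).comp (E0 ω) = (s0 ω * δ) • rk1 (g ω) (A1 ω (u ω)) := by
          simp only [hE0def]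
          ext x
          simp only [ContinuousLinearMap.coe_comp', Function.comp_apply,
            ContinuousLinearMap.smul_apply, rk1_apply]
          rw [(A1 ω).map_smul, (A1 ω).map_smul]
        rw [h1]
        have h2 : ‖(s0 ω * δ) • rk1 (g ω) (A1 ω (u ω))‖ ≤
            ‖s0 ω * δ‖ * ‖rk1 (g ω) (A1 ω (u ω))‖ := ContinuousLinearMap.opNorm_smul_le _ _
        rw [rk1_norm, hgw, one_mul, Real.norm_eq_abs, abs_mul, habs_s0, one_mul,
          abs_of_nonneg hδpos.le] at h2
        exact h2
    have h2A : ‖A1 ω‖ < 2 * ‖A1 ω (u ω)‖ := huA ω hmemV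
    have hAn : δ ^ n ≤ ‖A1 ω‖ := hcan ω hmemV
    have hCNg' : δ * ‖A1 ω (u ω)‖ ≤ ‖cocycle (⇑θ) S (n + 1) ω (g ω)‖ := hlowg
    constructor
    · -- alignment
      have key : ε * (2 * M + δ) ≤ δ := by
        rw [hδdef]
        nlinarith [mul_nonneg hε0.le (show (0:ℝ) ≤ 1 - ε by linarith),
          mul_nonneg (mul_nonneg hε0.le hM0) (show (0:ℝ) ≤ 1 - 3 * ε by linarith)]
      have c1 : ε * ‖cocycle (⇑θ) S (n + 1) ω‖ ≤ ε * (‖A1 ω‖ * M + δ * ‖A1 ω (u ω)‖) :=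
        mul_le_mul_of_nonneg_left hupper hε0.le
      have c2 : ‖A1 ω‖ * M ≤ 2 * ‖A1 ω (u ω)‖ * M :=
        mul_le_mul_of_nonneg_right h2A.le hM0
      have c5 : ε * (‖A1 ω‖ * M + δ * ‖A1 ω (u ω)‖) ≤
          ε * (2 * ‖A1 ω (u ω)‖ * M + δ * ‖A1 ω (u ω)‖) :=
        mul_le_mul_of_nonneg_left (by linarith) hε0.le
      have c3 : ε * (2 * ‖A1 ω (u ω)‖ * M + δ * ‖A1 ω (u ω)‖) =
          (ε * (2 * M + δ)) * ‖A1 ω (u ω)‖ := by ring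
      have c4 : (ε * (2 * M + δ)) * ‖A1 ω (u ω)‖ ≤ δ * ‖A1 ω (u ω)‖ :=
        mul_le_mul_of_nonneg_right key (norm_nonneg _)
      linarith
    · -- lower bound on the norm
      have hCN1 : ‖cocycle (⇑θ) S (n + 1) ω (g ω)‖ ≤ ‖cocycle (⇑θ) S (n + 1) ω‖ :=
        (cocycle (⇑θ) S (n + 1) ω).unit_le_opNorm _ hgw.le
      have hd1 : δ ^ (n + 1) ≤ 2 * (δ * ‖A1 ω (u ω)‖) := by
        calc δ ^ (n + 1) = δ * δ ^ n := by rw [pow_succ]; ring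
          _ ≤ δ * ‖A1 ω‖ := mul_le_mul_of_nonneg_left hAn hδpos.le
          _ ≤ δ * (2 * ‖A1 ω (u ω)‖) := mul_le_mul_of_nonneg_left h2A.le hδpos.le
          _ = 2 * (δ * ‖A1 ω (u ω)‖) := by ring
      have hd2 : (3 * ε) ^ (n + 1) ≤ δ ^ (n + 1) := pow_le_pow_left₀ (by positivity) hδ3 _
      have hd3 : 2 * ε ^ (n + 2) ≤ (3 * ε) ^ (n + 1) := by
        have h31 : (3:ℝ) ≤ 3 ^ (n + 1) := le_self_pow₀ (by norm_num) (Nat.succ_ne_zero n)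
        have hmp : (3 * ε) ^ (n + 1) = 3 ^ (n + 1) * ε ^ (n + 1) := mul_pow _ _ _
        have hεp : (0:ℝ) ≤ ε ^ (n + 1) := pow_nonneg hε0.le _
        have h4 : 3 * ε ^ (n + 1) ≤ 3 ^ (n + 1) * ε ^ (n + 1) :=
          mul_le_mul_of_nonneg_right h31 hεp
        have h5 : 2 * ε ^ (n + 2) = 2 * ε * ε ^ (n + 1) := by ring
        have h6 : 2 * ε * ε ^ (n + 1) ≤ 3 * ε ^ (n + 1) :=
          mul_le_mul_of_nonneg_right (by linarith) hεp
        linarith [hmp ▸ h4]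
      show ε ^ (n + 2) ≤ ‖cocycle (⇑θ) S (n + 1) ω‖
      linarith
end
end

section
/- Let (C_ω)_{ω∈Ω} be a family of closed proper convex cones in H, let c, c′ : Ω → H be measurable with ‖c(ω)‖ = ‖c′(ω)‖ = 1, and let r > 0 be such that the closed ball B(c(ω), r) ⊆ C_ω and B(c′(ω), r) ⊆ C′_ω for all ω. Let T be a bounded random compact operator and N ∈ ℕ such that T^N_ω C_ω ⊆ C_{θ^N ω} for all ω, and let R > 0 be such that R·T^N_ω v − c(θ^N ω) ∈ C_{θ^N ω} for every ω and every v ∈ C_ω with ‖v‖ = 1. Then there exists ε > 0 such that every bounded random compact operator S with ‖S − T‖_∞ ≤ ε satisfies: S^N_ω C_ω ⊆ C_{θ^N ω} for all ω, and t·S^N_ω v − c(θ^N ω) ∈ C_{θ^N ω} for every t ≥ 4R/r, every ω, and every v ∈ C_ω with ‖v‖ = 1 (in particular β_{C_{θ^N ω}}(S^N_ω v, c(θ^N ω)) ≤ 4R/r). -/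
open MeasureTheory Filter Topology TopologicalSpace
open scoped RealInnerProductSpace ENNReal

noncomputable section

variable {Ω H : Type*}

/-- A closed proper convex cone. -/
def IsConvexProperCone [NormedAddCommGroup H] [NormedSpace ℝ H] (C : Set H) : Prop :=
  IsClosed C ∧ Convex ℝ C ∧ (∀ t : ℝ, 0 ≤ t → ∀ v ∈ C, t • v ∈ C) ∧ C ∩ (-C) = {0}

/-- The dual cone `C' = {u : ⟪u, v⟫ ≥ 0 for all v ∈ C}`. -/
def dualCone [NormedAddCommGroup H] [InnerProductSpace ℝ H] (C : Set H) : Set H :=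
  {u : H | ∀ v ∈ C, 0 ≤ ⟪u, v⟫}

lemma cocycle_norm_le' [NormedAddCommGroup H] [NormedSpace ℝ H] (θ : Ω → Ω)
    (S : Ω → H →L[ℝ] H) (B : ℝ) (hB : 1 ≤ B) :
    ∀ (n : ℕ) (ω : Ω), (∀ k < n, ‖S (θ^[k] ω)‖ ≤ B) → ‖cocycle θ S n ω‖ ≤ B ^ n
  | 0, ω, _ => by simpa [cocycle] using ContinuousLinearMap.norm_id_le (𝕜 := ℝ) (E := H)
  | n + 1, ω, h => by
    have h1 : ‖cocycle θ S n (θ ω)‖ ≤ B ^ n := by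
      refine cocycle_norm_le' θ S B hB n (θ ω) (fun k hk => ?_)
      have := h (k + 1) (by omega)
      simpa [Function.iterate_succ_apply] using this
    have h2 : ‖S ω‖ ≤ B := by simpa using h 0 (by omega)
    calc ‖cocycle θ S (n + 1) ω‖ ≤ ‖cocycle θ S n (θ ω)‖ * ‖S ω‖ :=
          ContinuousLinearMap.opNorm_comp_le _ _
      _ ≤ B ^ n * B :=
          mul_le_mul h1 h2 (norm_nonneg _) (pow_nonneg (by linarith) n)
      _ = B ^ (n + 1) := (pow_succ B n).symm

lemma cocycle_sub_norm_le' [NormedAddCommGroup H] [NormedSpace ℝ H] (θ : Ω → Ω)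
    (S T : Ω → H →L[ℝ] H) (B ε : ℝ) (hB : 1 ≤ B) (hε : 0 ≤ ε) :
    ∀ (n : ℕ) (ω : Ω),
      (∀ k < n, ‖S (θ^[k] ω)‖ ≤ B ∧ ‖T (θ^[k] ω)‖ ≤ B ∧
        ‖S (θ^[k] ω) - T (θ^[k] ω)‖ ≤ ε) →
      ‖cocycle θ S n ω - cocycle θ T n ω‖ ≤ n * ε * B ^ n
  | 0, ω, _ => by simp [cocycle]
  | n + 1, ω, h => by
    have hshift : ∀ k < n, ‖S (θ^[k] (θ ω))‖ ≤ B ∧ ‖T (θ^[k] (θ ω))‖ ≤ B ∧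
        ‖S (θ^[k] (θ ω)) - T (θ^[k] (θ ω))‖ ≤ ε := by
      intro k hk
      have := h (k + 1) (by omega)
      simpa [Function.iterate_succ_apply] using this
    have hA : ‖cocycle θ S n (θ ω)‖ ≤ B ^ n :=
      cocycle_norm_le' θ S B hB n (θ ω) (fun k hk => (hshift k hk).1)
    have hrec := cocycle_sub_norm_le' θ S T B ε hB hε n (θ ω) hshift
    have h0 := h 0 (by omega)
    simp only [Function.iterate_zero, id_eq] at h0
    have key : cocycle θ S (n + 1) ω - cocycle θ T (n + 1) ω
        = (cocycle θ S n (θ ω)).comp (S ω - T ω)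
          + (cocycle θ S n (θ ω) - cocycle θ T n (θ ω)).comp (T ω) := by
      simp only [cocycle, ContinuousLinearMap.comp_sub, ContinuousLinearMap.sub_comp]
      abel
    rw [key]
    have hBn : (0 : ℝ) ≤ B ^ n := pow_nonneg (by linarith) n
    have t1 : ‖(cocycle θ S n (θ ω)).comp (S ω - T ω)‖ ≤ B ^ n * ε :=
      le_trans (ContinuousLinearMap.opNorm_comp_le _ _)
        (mul_le_mul hA h0.2.2 (norm_nonneg _) hBn)
    have t2 : ‖(cocycle θ S n (θ ω) - cocycle θ T n (θ ω)).comp (T ω)‖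
        ≤ (n * ε * B ^ n) * B :=
      le_trans (ContinuousLinearMap.opNorm_comp_le _ _)
        (mul_le_mul hrec h0.2.1 (norm_nonneg _)
          (by positivity))
    calc ‖_ + _‖ ≤ ‖(cocycle θ S n (θ ω)).comp (S ω - T ω)‖
          + ‖(cocycle θ S n (θ ω) - cocycle θ T n (θ ω)).comp (T ω)‖ := norm_add_le _ _
      _ ≤ B ^ n * ε + (n * ε * B ^ n) * B := add_le_add t1 t2
      _ ≤ (n + 1 : ℕ) * ε * B ^ (n + 1) := by
          push_cast
          rw [pow_succ]
          nlinarith [mul_nonneg hε hBn, mul_nonneg (mul_nonneg (Nat.cast_nonneg (α := ℝ) n) hε) hBn]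

/-- Stability part of the proof of Proposition 3.3 (Generalized Krein–Rutman theorem):
strict invariance of a family of cones satisfying condition (C) persists under small
perturbations in the essential supremum norm, with the uniform bound
`β_{C_{θ^N ω}}(S^N_ω v, c(θ^N ω)) ≤ 4R/r` expressed as
`t • S^N_ω v - c(θ^N ω) ∈ C_{θ^N ω}` for all `t ≥ 4R/r`. -/
theorem cone_invariance_stable_under_perturbation
    [NormedAddCommGroup H] [InnerProductSpace ℝ H] [CompleteSpace H] [SeparableSpace H]
    [MeasurableSpace H] [BorelSpace H] (hinf : ¬ FiniteDimensional ℝ H)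
    [MeasurableSpace Ω] (μ : Measure Ω) [IsProbabilityMeasure μ]
    (θ : Ω ≃ᵐ Ω) (hθ : MeasurePreserving (⇑θ) μ μ)
    (C : Ω → Set H) (hcone : ∀ ω, IsConvexProperCone (C ω))
    (c c' : Ω → H) (hc : Measurable c) (hc' : Measurable c')
    (hc1 : ∀ ω, ‖c ω‖ = 1) (hc'1 : ∀ ω, ‖c' ω‖ = 1)
    (r : ℝ) (hr : 0 < r)
    (hball : ∀ ω, Metric.closedBall (c ω) r ⊆ C ω)
    (hball' : ∀ ω, Metric.closedBall (c' ω) r ⊆ dualCone (C ω))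
    (T : Ω → H →L[ℝ] H) (hT : IsBddRandomCompactOp μ T) (N : ℕ)
    (hinv : ∀ ω, ∀ v ∈ C ω, cocycle (⇑θ) T N ω v ∈ C ((⇑θ)^[N] ω))
    (R : ℝ) (hR : 0 < R)
    (hstrict : ∀ ω, ∀ v ∈ C ω, ‖v‖ = 1 →
      R • cocycle (⇑θ) T N ω v - c ((⇑θ)^[N] ω) ∈ C ((⇑θ)^[N] ω)) :
    ∃ ε : ℝ, 0 < ε ∧ ∀ S : Ω → H →L[ℝ] H, IsBddRandomCompactOp μ S →
      (∀ᵐ ω ∂μ, ‖S ω - T ω‖ ≤ ε) →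
      ∀ᵐ ω ∂μ, (∀ v ∈ C ω, cocycle (⇑θ) S N ω v ∈ C ((⇑θ)^[N] ω)) ∧
        ∀ t : ℝ, 4 * R / r ≤ t → ∀ v ∈ C ω, ‖v‖ = 1 →
          t • cocycle (⇑θ) S N ω v - c ((⇑θ)^[N] ω) ∈ C ((⇑θ)^[N] ω) := by
  classical
  set κ : ℝ := r / (2 * R) with hκdef
  have hκ : 0 < κ := by positivity
  set M : ℝ := (essSup (fun ω => (‖T ω‖₊ : ℝ≥0∞)) μ).toReal with hMdef
  have hM0 : 0 ≤ M := ENNReal.toReal_nonneg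
  set B : ℝ := M + 1 with hBdef
  have hB : 1 ≤ B := by simp [hBdef]; linarith
  have hden : 0 < (N : ℝ) * B ^ N + 1 := by positivity
  set ε : ℝ := min 1 (κ / ((N : ℝ) * B ^ N + 1)) with hεdef
  have hε : 0 < ε := lt_min one_pos (by positivity)
  have hε1 : ε ≤ 1 := min_le_left _ _
  refine ⟨ε, hε, ?_⟩
  intro S hS hclose
  -- a.e. bound on ‖T‖
  have hTM : ∀ᵐ ω ∂μ, ‖T ω‖ ≤ M := by
    filter_upwards [ae_le_essSup (f := fun ω => (‖T ω‖₊ : ℝ≥0∞)) (μ := μ)] with ω hω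
    have := ENNReal.toReal_mono hT.bdd.ne hω
    simpa using this
  have hG : ∀ᵐ ω ∂μ, ‖T ω‖ ≤ M ∧ ‖S ω - T ω‖ ≤ ε := hTM.and hclose
  have hGk : ∀ k : ℕ, ∀ᵐ ω ∂μ, ‖T ((⇑θ)^[k] ω)‖ ≤ M ∧ ‖S ((⇑θ)^[k] ω) - T ((⇑θ)^[k] ω)‖ ≤ ε := by
    intro k
    have hmp : MeasurePreserving ((⇑θ)^[k]) μ μ := hθ.iterate k
    rw [ae_iff] at hG ⊢
    have := hmp.quasiMeasurePreserving.preimage_null hG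
    simpa [Set.preimage_setOf_eq] using this
  have hall : ∀ᵐ ω ∂μ, ∀ k : ℕ,
      ‖T ((⇑θ)^[k] ω)‖ ≤ M ∧ ‖S ((⇑θ)^[k] ω) - T ((⇑θ)^[k] ω)‖ ≤ ε := ae_all_iff.mpr hGk
  filter_upwards [hall] with ω hω
  -- pointwise setup
  obtain ⟨hDclosed, hDconvex, hDscale, hDproper⟩ := hcone ((⇑θ)^[N] ω)
  obtain ⟨_, _, hscaleω, _⟩ := hcone ω
  set cN : H := c ((⇑θ)^[N] ω) with hcNdef
  have hcN1 : ‖cN‖ = 1 := hc1 _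
  have hadd : ∀ u ∈ C ((⇑θ)^[N] ω), ∀ w ∈ C ((⇑θ)^[N] ω), u + w ∈ C ((⇑θ)^[N] ω) := by
    intro u hu w hw
    have h12 := hDconvex hu hw (by norm_num : (0:ℝ) ≤ 1/2) (by norm_num : (0:ℝ) ≤ 1/2)
      (by norm_num)
    have h2 := hDscale 2 (by norm_num) _ h12
    have : (2:ℝ) • ((1/2 : ℝ) • u + (1/2 : ℝ) • w) = u + w := by
      rw [smul_add, smul_smul, smul_smul]; norm_num
    rwa [this] at h2
  have hcN_mem : cN ∈ C ((⇑θ)^[N] ω) := hball _ (Metric.mem_closedBall_self hr.le)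
  have h0mem : (0 : H) ∈ C ((⇑θ)^[N] ω) := by
    simpa using hDscale 0 le_rfl _ hcN_mem
  -- r ≤ 1
  have hr1 : r ≤ 1 := by
    by_contra hcon
    push_neg at hcon
    have h1 : (1 - r) • cN ∈ C ((⇑θ)^[N] ω) := by
      apply hball
      rw [Metric.mem_closedBall, dist_eq_norm]
      have : (1 - r) • cN - cN = (-r) • cN := by
        rw [sub_smul, one_smul, neg_smul]; abel
      rw [this, norm_smul, hcN1]
      simp [abs_of_pos hr]
    have h2 : (r - 1) • cN ∈ C ((⇑θ)^[N] ω) := hDscale (r - 1) (by linarith) _ hcN_mem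
    have hmem : (r - 1) • cN ∈ C ((⇑θ)^[N] ω) ∩ (-(C ((⇑θ)^[N] ω))) := by
      refine ⟨h2, ?_⟩
      rw [Set.mem_neg]
      have : -((r - 1) • cN) = (1 - r) • cN := by rw [← neg_smul]; ring_nf
      rwa [this]
    rw [hDproper] at hmem
    have hcNne : cN ≠ 0 := by
      intro h; rw [h] at hcN1; simp at hcN1
    have := (smul_eq_zero.mp hmem).resolve_right hcNne
    linarith
  -- operator norm bounds along the orbit
  have hTk : ∀ k, k < N → ‖T ((⇑θ)^[k] ω)‖ ≤ B := fun k _ => by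
    have := (hω k).1; simp only [hBdef]; linarith
  have hSk : ∀ k, k < N → ‖S ((⇑θ)^[k] ω)‖ ≤ B := by
    intro k _
    have h1 := (hω k).1
    have h2 := (hω k).2
    have h3 : S ((⇑θ)^[k] ω) = T ((⇑θ)^[k] ω) + (S ((⇑θ)^[k] ω) - T ((⇑θ)^[k] ω)) := by abel
    calc ‖S ((⇑θ)^[k] ω)‖ = ‖T ((⇑θ)^[k] ω) + (S ((⇑θ)^[k] ω) - T ((⇑θ)^[k] ω))‖ := by rw [← h3]
      _ ≤ ‖T ((⇑θ)^[k] ω)‖ + ‖S ((⇑θ)^[k] ω) - T ((⇑θ)^[k] ω)‖ := norm_add_le _ _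
      _ ≤ B := by simp only [hBdef]; linarith
  have hop : ‖cocycle (⇑θ) S N ω - cocycle (⇑θ) T N ω‖ ≤ κ := by
    have hmain := cocycle_sub_norm_le' (⇑θ) S T B ε hB hε.le N ω
      (fun k hk => ⟨hSk k hk, hTk k hk, (hω k).2⟩)
    have h1 : ε ≤ κ / ((N : ℝ) * B ^ N + 1) := min_le_right _ _
    have hBn : (0 : ℝ) ≤ B ^ N := pow_nonneg (by linarith) N
    have h2 : (N : ℝ) * ε * B ^ N ≤ (N : ℝ) * (κ / ((N : ℝ) * B ^ N + 1)) * B ^ N := by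
      apply mul_le_mul_of_nonneg_right _ hBn
      exact mul_le_mul_of_nonneg_left h1 (Nat.cast_nonneg N)
    have h3 : (N : ℝ) * (κ / ((N : ℝ) * B ^ N + 1)) * B ^ N
        = κ * (((N : ℝ) * B ^ N) / ((N : ℝ) * B ^ N + 1)) := by ring
    have h4 : ((N : ℝ) * B ^ N) / ((N : ℝ) * B ^ N + 1) ≤ 1 :=
      (div_le_one hden).mpr (by linarith)
    calc ‖cocycle (⇑θ) S N ω - cocycle (⇑θ) T N ω‖ ≤ (N : ℝ) * ε * B ^ N := hmain
      _ ≤ κ * (((N : ℝ) * B ^ N) / ((N : ℝ) * B ^ N + 1)) := by rw [← h3]; exact h2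
      _ ≤ κ * 1 := mul_le_mul_of_nonneg_left h4 hκ.le
      _ = κ := mul_one κ
  have hvec : ∀ v : H, ‖cocycle (⇑θ) S N ω v - cocycle (⇑θ) T N ω v‖ ≤ κ * ‖v‖ := by
    intro v
    have := (cocycle (⇑θ) S N ω - cocycle (⇑θ) T N ω).le_of_opNorm_le hop v
    simpa using this
  -- main claim (part 2)
  have main : ∀ t : ℝ, 4 * R / r ≤ t → ∀ v ∈ C ω, ‖v‖ = 1 →
      t • cocycle (⇑θ) S N ω v - cN ∈ C ((⇑θ)^[N] ω) := by
    intro t ht v hv hv1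
    have ht2R : 2 * R ≤ t := by
      have h4r : 4 * R ≤ 4 * R / r := by
        rw [le_div_iff₀ hr]; nlinarith
      linarith
    set w : H := cocycle (⇑θ) T N ω v with hwdef
    set p : H := cocycle (⇑θ) S N ω v - w with hpdef
    have hpκ : ‖p‖ ≤ κ := by
      have := hvec v
      rw [hv1, mul_one] at this
      exact this
    set a : ℝ := t / (2 * R) with hadef
    have ha1 : 1 ≤ a := by
      rw [hadef, le_div_iff₀ (by positivity)]; linarith
    have ha0 : 0 < a := by linarith
    have claim1 : t • w - (1 + a) • cN ∈ C ((⇑θ)^[N] ω) := by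
      have h1 : (1 + a) • (R • w - cN) ∈ C ((⇑θ)^[N] ω) :=
        hDscale _ (by linarith) _ (hstrict ω v hv hv1)
      have haR : (1 + a) * R = R + t / 2 := by
        rw [hadef]; field_simp
      have h2 : (t - (1 + a) * R) • w ∈ C ((⇑θ)^[N] ω) :=
        hDscale _ (by rw [haR]; linarith) _ (hinv ω v hv)
      have h3 := hadd _ h1 _ h2
      have heq : (1 + a) • (R • w - cN) + (t - (1 + a) * R) • w = t • w - (1 + a) • cN := by
        module
      rwa [heq] at h3
    have claim2 : a • cN + t • p ∈ C ((⇑θ)^[N] ω) := by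
      have ht0 : t ≠ 0 := ne_of_gt (by linarith)
      have hta : t / a = 2 * R := by
        rw [hadef, div_div_eq_mul_div, mul_div_cancel_left₀ _ ht0]
      have hin : cN + (t / a) • p ∈ Metric.closedBall cN r := by
        rw [Metric.mem_closedBall, dist_eq_norm, add_sub_cancel_left, norm_smul, hta]
        rw [Real.norm_eq_abs, abs_of_pos (by linarith : (0:ℝ) < 2 * R)]
        calc 2 * R * ‖p‖ ≤ 2 * R * κ := by nlinarith
          _ = r := by rw [hκdef]; field_simp
      have h5 := hDscale a ha0.le _ (hball _ hin)
      have heq : a • (cN + (t / a) • p) = a • cN + t • p := by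
        rw [smul_add, smul_smul, mul_div_cancel₀ _ ha0.ne']
      rwa [heq] at h5
    have final := hadd _ claim1 _ claim2
    have heq : t • w - (1 + a) • cN + (a • cN + t • p) = t • cocycle (⇑θ) S N ω v - cN := by
      have hs : cocycle (⇑θ) S N ω v = w + p := by rw [hpdef]; abel
      rw [hs, smul_add, add_smul, one_smul]
      abel
    rwa [heq] at final
  refine ⟨?_, main⟩
  -- part 1
  intro v hv
  rcases eq_or_ne v 0 with rfl | hv0
  · simpa using h0mem
  · have hn : 0 < ‖v‖ := norm_pos_iff.mpr hv0
    set u : H := ‖v‖⁻¹ • v with hudef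
    have hu : u ∈ C ω := hscaleω _ (by positivity) v hv
    have hu1 : ‖u‖ = 1 := by
      rw [hudef, norm_smul, norm_inv, norm_norm, inv_mul_cancel₀ hn.ne']
    have h1 := main (4 * R / r) le_rfl u hu hu1
    have h2 := hadd _ h1 _ hcN_mem
    have h3 : (4 * R / r) • cocycle (⇑θ) S N ω u ∈ C ((⇑θ)^[N] ω) := by
      have : (4 * R / r) • cocycle (⇑θ) S N ω u - cN + cN
          = (4 * R / r) • cocycle (⇑θ) S N ω u := by abel
      rwa [this] at h2
    have h4 := hDscale (r / (4 * R)) (by positivity) _ h3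
    have h5 : cocycle (⇑θ) S N ω u ∈ C ((⇑θ)^[N] ω) := by
      rw [smul_smul] at h4
      have : r / (4 * R) * (4 * R / r) = 1 := by field_simp
      rwa [this, one_smul] at h4
    have h6 := hDscale (‖v‖) (norm_nonneg v) _ h5
    rwa [← ContinuousLinearMap.map_smul, hudef, smul_smul, mul_inv_cancel₀ hn.ne', one_smul] at h6
end
end

section
/- Let H be a real Hilbert space, A : H → H a bounded linear operator, and v, u ∈ H with ‖v‖ = ‖u‖ = 1. Suppose K ≥ 2, δ > 0 and M > 0 satisfy ‖Av‖ ≥ K‖Au‖, ‖Av‖ ≥ δ, and ‖A‖ ≤ M. Then 1 − ⟨v, u⟩ ≥ δ²/(2K²M²). -/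
open scoped RealInnerProductSpace

/-- Claim (i) of Remark 5.9 (abstract form): dominated growth of `A` along `v` relative to
`u`, together with a lower bound on `‖Av‖` and an upper bound on `‖A‖`, forces the angle
between the unit vectors `v` and `u` to be uniformly separated from zero. -/
theorem angle_separation_of_domination
    {H : Type*} [NormedAddCommGroup H] [InnerProductSpace ℝ H]
    (A : H →L[ℝ] H) (v u : H) (hv : ‖v‖ = 1) (hu : ‖u‖ = 1)
    (K δ M : ℝ) (hK : 2 ≤ K) (hδ : 0 < δ) (hM : 0 < M)
    (hdom : K * ‖A u‖ ≤ ‖A v‖) (hlow : δ ≤ ‖A v‖) (hbdd : ‖A‖ ≤ M) :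
    δ ^ 2 / (2 * K ^ 2 * M ^ 2) ≤ 1 - ⟪v, u⟫ := by
  have hK0 : (0:ℝ) < K := lt_of_lt_of_le two_pos hK
  -- ‖Au‖ ≤ ‖Av‖ / 2
  have hAu : 2 * ‖A u‖ ≤ ‖A v‖ := le_trans (by nlinarith [norm_nonneg (A u)]) hdom
  -- ‖A(v-u)‖ ≥ ‖Av‖ - ‖Au‖ ≥ ‖Av‖/2 ≥ δ/2
  have h1 : ‖A v‖ - ‖A u‖ ≤ ‖A (v - u)‖ := by
    have := norm_sub_norm_le (A v) (A u)
    have hmap : A v - A u = A (v - u) := (map_sub A v u).symm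
    linarith [le_abs_self (‖A v‖ - ‖A u‖), this, hmap ▸ this]
  have h2 : δ / 2 ≤ ‖A (v - u)‖ := by linarith
  -- ‖A(v-u)‖ ≤ M ‖v-u‖
  have h3 : ‖A (v - u)‖ ≤ M * ‖v - u‖ := by
    calc ‖A (v - u)‖ ≤ ‖A‖ * ‖v - u‖ := A.le_opNorm _
    _ ≤ M * ‖v - u‖ := by gcongr
  have h4 : δ / (2 * M) ≤ ‖v - u‖ := by
    rw [div_le_iff₀ (by positivity)]
    nlinarith
  have h5 : ‖v - u‖ ^ 2 = 2 - 2 * ⟪v, u⟫ := by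
    rw [← real_inner_self_eq_norm_sq]
    simp only [inner_sub_sub_self, real_inner_self_eq_norm_sq, hv, hu, real_inner_comm u v]
    ring
  have h6 : (δ / (2 * M)) ^ 2 ≤ ‖v - u‖ ^ 2 :=
    pow_le_pow_left₀ (by positivity) h4 2
  rw [div_le_iff₀ (by positivity)]
  have hK2 : (4:ℝ) ≤ K ^ 2 := by nlinarith
  have : (δ / (2 * M)) ^ 2 = δ ^ 2 / (4 * M ^ 2) := by ring
  rw [this, h5] at h6
  rw [div_le_iff₀ (by positivity)] at h6
  nlinarith [sq_nonneg δ, sq_nonneg M]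
end
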